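/- Let 𝔉 be an iterated graph system satisfying Assumption (GR) which admits a flipping symmetry η_t for every type t, and let C_deg = sup_{m ∈ ℕ, w ∈ W_m} deg_{G_m}(w) (finite by (GR1)–(GR2)). Fix p ∈ (1,∞), q = p/(p−1), n,m ∈ ℕ, nonempty disjoint sets A_n,B_n ⊆ W_n together with an assignment of a pair (𝔱(u),𝔬(u)) ∈ 𝒯×{+,−} to each u ∈ A_n∪B_n, a flow basis 𝓕^{(m)} of G̃_m, and a unit flow F_n from A_n to B_n in G_n. Set A_{n+m} = {uv : u ∈ A_n, v ∈ I_{𝔱(u),𝔬(u)}^{(m)}} and B_{n+m} = {uv : u ∈ B_n, v ∈ I_{𝔱(u),𝔬(u)}^{(m)}}. Then there exist a constant C ≥ 1 depending only on C_deg and continuously on p, and a unit flow F_{n+m} from A_{n+m} to B_{n+m} in G_{n+m}, such that E_q(F_{n+m}) ≤ C·E_q(𝓕^{(m)})·E_q(F_n), and such that for every u ∈ A_n∪B_n and every v ∈ L := I_{𝔱(u),𝔬(u)}^{(m)}, div F_{n+m}(uv) = div F_n(u)·𝓕_{[L→L*]}(v_L,v), where L* = I_{𝔱(u),−𝔬(u)}^{(m)}.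 -/

import Mathlib

namespace IGSP

/-- An iterated graph system: a finite connected oriented graph `G₁ = (S, E)`, a set of
types `T` with a surjective typing map on edges, and nonempty gluing rules `I_t ⊆ S × S`. -/
structure System (S T : Type) where
  E : S → S → Prop
  not_both : ∀ x y : S, E x y → ¬ E y x
  irrefl : ∀ x : S, ¬ E x x
  conn : ∀ x y : S, Relation.ReflTransGen (fun a b => E a b ∨ E b a) x y
  typ : S → S → T
  typ_surj : ∀ t : T, ∃ x y, E x y ∧ typ x y = t
  glue : T → S → S → Prop
  glue_nonempty : ∀ t : T, ∃ x y, glue t x y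

variable {S T : Type}

/-- Words of length `m` over the symbol set `S`. -/
abbrev Word (S : Type) (m : ℕ) := Fin m → S

open Classical in
/-- The replacement graphs together with their typing functions, defined by recursion on
the length of words: `G₁ = (S,E)` and an oriented edge `(w,v) ∈ E_{m+1}` holds iff either
the length-`m` prefixes agree and the last symbols form an edge of `G₁`, or the prefixes
form an edge of `E_m` and the last symbols belong to the gluing rule of its type. -/
noncomputable def replData [Nonempty T] (F : System S T) :
    (L : ℕ) → (Word S L → Word S L → Prop) × (Word S L → Word S L → T)
  | 0 => ⟨fun _ _ => False, fun _ _ => Classical.arbitrary T⟩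
  | 1 => ⟨fun w v => F.E (w 0) (v 0), fun w v => F.typ (w 0) (v 0)⟩
  | L + 2 =>
      ⟨fun w v =>
        (Fin.init w = Fin.init v ∧ F.E (w (Fin.last (L + 1))) (v (Fin.last (L + 1)))) ∨
        ((replData F (L + 1)).1 (Fin.init w) (Fin.init v) ∧
          F.glue ((replData F (L + 1)).2 (Fin.init w) (Fin.init v))
            (w (Fin.last (L + 1))) (v (Fin.last (L + 1)))),
       fun w v =>
        if Fin.init w = Fin.init v then F.typ (w (Fin.last (L + 1))) (v (Fin.last (L + 1)))
        else (replData F (L + 1)).2 (Fin.init w) (Fin.init v)⟩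

/-- The oriented edge relation of the replacement graph on words of length `L`. -/
def edge [Nonempty T] (F : System S T) (L : ℕ) (w v : Word S L) : Prop :=
  (replData F L).1 w v

/-- The typing function of the replacement graph on words of length `L`. -/
noncomputable def etyp [Nonempty T] (F : System S T) (L : ℕ) (w v : Word S L) : T :=
  (replData F L).2 w v

/-- The unoriented edge ("{w,v} ∈ E_L") relation. -/
def adjW [Nonempty T] (F : System S T) (L : ℕ) (w v : Word S L) : Prop :=
  edge F L w v ∨ edge F L v w

/-- The replacement graph `G_L` as a simple graph on words of length `L`. -/
noncomputable def replGraph [Nonempty T] (F : System S T) (L : ℕ) : SimpleGraph (Word S L) where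
  Adj w v := w ≠ v ∧ adjW F L w v
  symm := by
    constructor
    intro w v h
    exact ⟨Ne.symm h.1, Or.symm h.2⟩
  loopless := by
    constructor
    intro w h
    exact h.1 rfl

/-- The degree of a word `w` in the replacement graph `G_L`: the number of `v` with
`{w,v} ∈ E_L`. -/
noncomputable def degGm [Nonempty T] (F : System S T) (L : ℕ) (w : Word S L) : ℕ :=
  {v : Word S L | adjW F L w v}.ncard

/-- `I_{t,+}`, the set of symbols occurring as the first coordinate of the gluing rule. -/
def Iplus (F : System S T) (t : T) : Set S := {a | ∃ b, F.glue t a b}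

/-- `I_{t,-}`, the set of symbols occurring as the second coordinate of the gluing rule. -/
def Iminus (F : System S T) (t : T) : Set S := {b | ∃ a, F.glue t a b}

/-- `I_{t,★}` where the orientation `★` is encoded by a boolean: `true = +`, `false = -`. -/
def Iset (F : System S T) (t : T) : Bool → Set S
  | true => Iplus F t
  | false => Iminus F t

/-- `I_{t,★}^{(m)} = (I_{t,★})^m ⊆ W_m`. -/
def IsetW (F : System S T) (t : T) (b : Bool) (m : ℕ) : Set (Word S m) :=
  {w | ∀ i, w i ∈ Iset F t b}

/-- The boundary `∂G_m = ⋃_{(t,★)} I_{t,★}^{(m)}`. -/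
def boundaryW (F : System S T) (m : ℕ) : Set (Word S m) :=
  ⋃ (t : T) (b : Bool), IsetW F t b m

/-- (GR1): every symbol has at most one gluing partner for each type and orientation. -/
def GR1 (F : System S T) : Prop :=
  ∀ (t : T) (s : S), {b | F.glue t s b}.Subsingleton ∧ {a | F.glue t a s}.Subsingleton

/-- (GR2): for no type, orientation and symbol are the gluing-partner count and the
corresponding oriented degree in `G₁` simultaneously nonzero. -/
def GR2 (F : System S T) : Prop :=
  ∀ (t : T) (s : S),
    ¬ ((∃ b, F.glue t s b) ∧ ∃ b, F.E s b ∧ F.typ s b = t) ∧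
    ¬ ((∃ a, F.glue t a s) ∧ ∃ a, F.E a s ∧ F.typ a s = t)

/-- (GR3): `I_{t,-} ∩ I_{t,+} = ∅` for every type `t`. -/
def GR3 (F : System S T) : Prop := ∀ t : T, Iminus F t ∩ Iplus F t = ∅

/-- Assumption (GR). -/
def GR (F : System S T) : Prop := GR1 F ∧ GR2 F ∧ GR3 F

/-- A path in the replacement graph `G_L`: a nonempty list of words with consecutive
entries joined by an edge. -/
def IsPath [Nonempty T] (F : System S T) (L : ℕ) (θ : List (Word S L)) : Prop :=
  θ ≠ [] ∧ θ.Chain' (adjW F L)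

open Classical in
/-- The projection `π_{L,k}` of a path: take length-`k` prefixes and remove consecutive
repetitions. -/
noncomputable def proj {k L : ℕ} (h : k ≤ L) (θ : List (Word S L)) : List (Word S k) :=
  (θ.map fun w => fun i => w (Fin.castLE h i)).destutter (· ≠ ·)

/-- An intersection path in `G_{m+1}`: a path admitting a compatible sequence of paths at
all levels with uniformly bounded lengths. -/
def IsIntersectionPath [Nonempty T] (F : System S T) (m : ℕ) (θ : List (Word S (m + 1))) :
    Prop :=
  IsPath F (m + 1) θ ∧
  ∃ Θ : (n : ℕ) → List (Word S (n + 1)),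
    Θ m = θ ∧ (∀ n, IsPath F (n + 1) (Θ n)) ∧
    (∀ (k n : ℕ) (h : k ≤ n), proj (Nat.succ_le_succ h) (Θ n) = Θ k) ∧
    ∃ C : ℕ, ∀ n, (Θ n).length ≤ C

/-- The fundamental neighbourhood `𝒩(w)`. -/
def nbhd [Nonempty T] (F : System S T) (m : ℕ) (w : Word S (m + 1)) :
    Set (Word S (m + 1)) :=
  {v | ∃ θ, IsIntersectionPath F m θ ∧ θ.head? = some w ∧ θ.getLast? = some v}

/-- Bounded geometry: the diameters of fundamental neighbourhoods are uniformly bounded. -/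
def BoundedGeometry [Nonempty T] (F : System S T) : Prop :=
  ∃ D : ℕ, ∀ (m : ℕ) (w : Word S (m + 1)), ∀ v₁ ∈ nbhd F m w, ∀ v₂ ∈ nbhd F m w,
    (replGraph F (m + 1)).dist v₁ v₂ ≤ D

/-- `|w ∧ v| < L` for words of length `L`: the words differ at some index below the last. -/
def ncRel {L : ℕ} (w v : Word S L) : Prop := ∃ j : Fin L, (j : ℕ) + 1 < L ∧ w j ≠ v j

/-- A non-collapsing path: consecutive vertices satisfy `|w ∧ v| < L`. -/
def NonCollapsing {L : ℕ} (θ : List (Word S L)) : Prop := θ.Chain' ncRel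

/-- A mapping between iterated graph systems. -/
structure Hom {S T S' T' : Type} (F : System S T) (F' : System S' T') where
  toFun : S → S'
  map_edge : ∀ x y, (F.E x y ∨ F.E y x) →
    (toFun x = toFun y ∨ F'.E (toFun x) (toFun y) ∨ F'.E (toFun y) (toFun x))
  glue_collapse : ∀ w1 v1, F.E w1 v1 → toFun w1 = toFun v1 →
    ∀ w2 v2, F.glue (F.typ w1 v1) w2 v2 → toFun w2 = toFun v2
  glue_fwd : ∀ w1 v1, F.E w1 v1 → F'.E (toFun w1) (toFun v1) →
    ∀ w2 v2, F.glue (F.typ w1 v1) w2 v2 →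
      F'.glue (F'.typ (toFun w1) (toFun v1)) (toFun w2) (toFun v2)
  glue_rev : ∀ w1 v1, F.E w1 v1 → F'.E (toFun v1) (toFun w1) →
    ∀ w2 v2, F.glue (F.typ w1 v1) w2 v2 →
      F'.glue (F'.typ (toFun v1) (toFun w1)) (toFun v2) (toFun w2)

/-- An isomorphism between iterated graph systems: a pair of mutually inverse mappings. -/
structure Iso {S T S' T' : Type} (F : System S T) (F' : System S' T') where
  hom : Hom F F'
  inv : Hom F' F
  left_inv : ∀ x, inv.toFun (hom.toFun x) = x
  right_inv : ∀ y, hom.toFun (inv.toFun y) = y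

/-- A flipping symmetry of type `t`. -/
def IsFlip (F : System S T) (t : T) (η : Iso F F) : Prop :=
  (∀ w ∈ Iplus F t, F.glue t w (η.hom.toFun w)) ∧
  (∀ v ∈ Iminus F t, F.glue t (η.hom.toFun v) v)

/-- The data of a reflection symmetry of an iterated graph system: an involutive
isomorphism together with the partition `S = C ∪ D ∪ Δ` satisfying (D1)-(D4). -/
structure ReflData (F : System S T) where
  iso : Iso F F
  C : Set S
  D : Set S
  invol : ∀ x, iso.hom.toFun (iso.hom.toFun x) = x
  C_not_fixed : ∀ x ∈ C, iso.hom.toFun x ≠ x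
  D_not_fixed : ∀ x ∈ D, iso.hom.toFun x ≠ x
  CD_disjoint : ∀ x, ¬ (x ∈ C ∧ x ∈ D)
  cover : ∀ x, x ∈ C ∨ x ∈ D ∨ iso.hom.toFun x = x
  image_C : iso.hom.toFun '' C = D
  edge_CD : ∀ x ∈ C, ∀ y ∈ D, (F.E x y ∨ F.E y x) → iso.hom.toFun x = y
  D2 : ∀ w1 v1, F.E w1 v1 → iso.hom.toFun v1 = v1 →
    (w1 ∈ C → Iminus F (F.typ w1 v1) ⊆ C ∪ {x | iso.hom.toFun x = x}) ∧
    (w1 ∈ D → Iminus F (F.typ w1 v1) ⊆ D ∪ {x | iso.hom.toFun x = x})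
  D3 : ∀ w1 v1, F.E w1 v1 → iso.hom.toFun w1 = w1 →
    (v1 ∈ C → Iplus F (F.typ w1 v1) ⊆ C ∪ {x | iso.hom.toFun x = x}) ∧
    (v1 ∈ D → Iplus F (F.typ w1 v1) ⊆ D ∪ {x | iso.hom.toFun x = x})
  D4 : ∀ w1 v1, F.E w1 v1 → iso.hom.toFun w1 = w1 → iso.hom.toFun v1 = v1 →
    ∀ w2 v2, F.glue (F.typ w1 v1) w2 v2 →
      (w2 ∈ C ∧ v2 ∈ C) ∨ (w2 ∈ D ∧ v2 ∈ D) ∨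
      (iso.hom.toFun w2 = w2 ∧ iso.hom.toFun v2 = v2)

/-- (D5): a reflection symmetry. -/
def IsRefl {F : System S T} (R : ReflData F) : Prop :=
  ∀ w1 v1, F.E w1 v1 → w1 ∈ R.C → v1 ∈ R.D →
    ∀ w2 v2, F.glue (F.typ w1 v1) w2 v2 → R.iso.hom.toFun w2 = v2

/-- (D5*): a separative reflection symmetry. -/
def IsSepRefl {F : System S T} (R : ReflData F) : Prop :=
  ∀ x ∈ R.C, ∀ y ∈ R.D, ¬ (F.E x y ∨ F.E y x)

/-- The coordinatewise action of a reflection symmetry on words. -/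
def wordMap {F : System S T} (R : ReflData F) {m : ℕ} (w : Word S m) : Word S m :=
  fun i => R.iso.hom.toFun (w i)

/-- The lifted set `C_α^{(m)}`: words whose first non-fixed coordinate lies in `C`. -/
def liftC {F : System S T} (R : ReflData F) (m : ℕ) : Set (Word S m) :=
  {w | ∃ k : Fin m, w k ∈ R.C ∧ ∀ j < k, R.iso.hom.toFun (w j) = w j}

/-- The lifted set `D_α^{(m)}`: words whose first non-fixed coordinate lies in `D`. -/
def liftD {F : System S T} (R : ReflData F) (m : ℕ) : Set (Word S m) :=
  {w | ∃ k : Fin m, w k ∈ R.D ∧ ∀ j < k, R.iso.hom.toFun (w j) = w j}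

end IGSP
namespace IGSP

variable {S T : Type}

/-- An antisymmetric function supported on the edges of a graph. -/
def Antisym {V : Type} (G : SimpleGraph V) (Φ : V → V → ℝ) : Prop :=
  (∀ x y, Φ x y = - Φ y x) ∧ ∀ x y, ¬ G.Adj x y → Φ x y = 0

/-- The divergence of `Φ` at a vertex. -/
noncomputable def fdiv {V : Type} (Φ : V → V → ℝ) (x : V) : ℝ := ∑ᶠ y, Φ x y

/-- A flow from `A` to `B`. -/
def IsFlow {V : Type} (G : SimpleGraph V) (A B : Set V) (Φ : V → V → ℝ) : Prop :=
  Antisym G Φ ∧ ∀ x, x ∉ A ∪ B → fdiv Φ x = 0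

/-- The total flow `I(Φ) = Σ_{x ∈ A} div Φ (x)`. -/
noncomputable def totalFlow {V : Type} (A : Set V) (Φ : V → V → ℝ) : ℝ :=
  ∑ᶠ x ∈ A, fdiv Φ x

/-- The `q`-energy `E_q(Φ) = Σ_{{x,y} ∈ E} |Φ(x,y)|^q` (each unordered edge counted once). -/
noncomputable def energy {V : Type} (q : ℝ) (Φ : V → V → ℝ) : ℝ :=
  (∑ᶠ x, ∑ᶠ y, |Φ x y| ^ q) / 2

/-- The degree of a vertex of a graph. -/
noncomputable def degOf {V : Type} (G : SimpleGraph V) (x : V) : ℕ := {y | G.Adj x y}.ncard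

/-- The maximal degree of a finite graph. -/
noncomputable def maxDeg {V : Type} [Fintype V] (G : SimpleGraph V) : ℕ :=
  Finset.univ.sup fun x => degOf G x

/-- The diameter of a finite graph (in the shortest-path metric). -/
noncomputable def gdiam {V : Type} [Fintype V] (G : SimpleGraph V) : ℕ :=
  Finset.univ.sup fun pr : V × V => G.dist pr.1 pr.2

/-- The set of vertices of a path. -/
def pathVerts {V : Type} (θ : List V) : Set V := {x | x ∈ θ}

/-- A density is admissible for a path family if it is nonnegative and its sum along
every path of the family is at least 1. -/
def Admissible {V : Type} (Θ : Set (List V)) (ρ : V → ℝ) : Prop :=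
  (∀ x, 0 ≤ ρ x) ∧ ∀ θ ∈ Θ, 1 ≤ ∑ᶠ x ∈ pathVerts θ, ρ x

/-- The discrete (vertex) `p`-modulus of a family of paths. -/
noncomputable def modulus {V : Type} (p : ℝ) (Θ : Set (List V)) : ℝ :=
  sInf {M | ∃ ρ : V → ℝ, Admissible Θ ρ ∧ M = ∑ᶠ x, ρ x ^ p}

/-- The `p`-resistance `E_q(A,B,G)`: infimal `q`-energy of unit flows from `A` to `B`. -/
noncomputable def resistance {V : Type} (q : ℝ) (G : SimpleGraph V) (A B : Set V) : ℝ :=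
  sInf {e | ∃ Φ, IsFlow G A B Φ ∧ totalFlow A Φ = 1 ∧ e = energy q Φ}

/-- The family `Θ_𝔞^{(m)}` of paths in `G_m` from `I_{t₁,★₁}^{(m)}` to `I_{t₂,★₂}^{(m)}`. -/
def ThetaIGS [Nonempty T] (F : System S T) (m : ℕ) (t₁ : T) (b₁ : Bool) (t₂ : T)
    (b₂ : Bool) : Set (List (Word S m)) :=
  {θ | IsPath F m θ ∧ (∃ w ∈ IsetW F t₁ b₁ m, θ.head? = some w) ∧
    ∃ v ∈ IsetW F t₂ b₂ m, θ.getLast? = some v}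

/-- `ℒ^{(m)}`, the collection of sets `I_{t,★}^{(m)}`. -/
def scriptL [Nonempty T] (F : System S T) (m : ℕ) : Set (Set (Word S m)) :=
  {A | ∃ (t : T) (b : Bool), A = IsetW F t b m}

/-- The added vertices `v_L` (for `L ∈ ℒ^{(m)}` and `v ∈ L`) of the graph `G̃_m`. -/
def AddedV [Nonempty T] (F : System S T) (m : ℕ) :=
  {pr : Set (Word S m) × Word S m // pr.1 ∈ scriptL F m ∧ pr.2 ∈ pr.1}

/-- The vertex set of the graph `G̃_m`. -/
def TildeV [Nonempty T] (F : System S T) (m : ℕ) := Word S m ⊕ AddedV F m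

/-- The graph `G̃_m`, obtained from `G_m` by attaching a pendant vertex `v_L` at every
`v ∈ L` for every `L ∈ ℒ^{(m)}`. -/
noncomputable def tildeG [Nonempty T] (F : System S T) (m : ℕ) : SimpleGraph (TildeV F m) where
  Adj x y :=
    match x, y with
    | Sum.inl w, Sum.inl v => w ≠ v ∧ adjW F m w v
    | Sum.inl w, Sum.inr pr => pr.1.2 = w
    | Sum.inr pr, Sum.inl w => pr.1.2 = w
    | Sum.inr _, Sum.inr _ => False
  symm := by
    constructor
    rintro (w | pr) (v | qr) h
    · exact ⟨Ne.symm h.1, Or.symm h.2⟩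
    · exact h
    · exact h
    · exact h.elim
  loopless := by
    constructor
    rintro (w | pr) h
    · exact h.1 rfl
    · exact h

/-- The set `L̃ = {v_L : v ∈ L}` of added vertices over `L`. -/
def tildeSet [Nonempty T] (F : System S T) (m : ℕ) (L : Set (Word S m)) :
    Set (TildeV F m) :=
  {x | ∃ pr : AddedV F m, pr.1.1 = L ∧ x = Sum.inr pr}

/-- A flow basis on `G̃_m`: a family of unit flows between the added vertex sets of all
pairs of distinct members of `ℒ^{(m)}`, satisfying (FB1)–(FB4). -/
structure FlowBasis [Nonempty T] (F : System S T) (ηfam : T → Iso F F) (m : ℕ) where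
  flow : (L₁ L₂ : Set (Word S m)) → L₁ ∈ scriptL F m → L₂ ∈ scriptL F m → L₁ ≠ L₂ →
    TildeV F m → TildeV F m → ℝ
  flow_isFlow : ∀ (L₁ L₂ : Set (Word S m)) (h₁ : L₁ ∈ scriptL F m) (h₂ : L₂ ∈ scriptL F m)
    (hne : L₁ ≠ L₂),
    IsFlow (tildeG F m) (tildeSet F m L₁) (tildeSet F m L₂) (flow L₁ L₂ h₁ h₂ hne)
  flow_unit : ∀ (L₁ L₂ : Set (Word S m)) (h₁ : L₁ ∈ scriptL F m) (h₂ : L₂ ∈ scriptL F m)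
    (hne : L₁ ≠ L₂), totalFlow (tildeSet F m L₁) (flow L₁ L₂ h₁ h₂ hne) = 1
  fb2 : ∀ (L₁ L₂ : Set (Word S m)) (h₁ : L₁ ∈ scriptL F m) (h₂ : L₂ ∈ scriptL F m)
    (hne : L₁ ≠ L₂) (pr : AddedV F m), pr.1.1 ≠ L₁ → pr.1.1 ≠ L₂ →
    flow L₁ L₂ h₁ h₂ hne (Sum.inr pr) (Sum.inl pr.1.2) = 0
  fb3_out : ∀ (L L₁ L₂ : Set (Word S m)) (hL : L ∈ scriptL F m) (h₁ : L₁ ∈ scriptL F m)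
    (h₂ : L₂ ∈ scriptL F m) (hne₁ : L ≠ L₁) (hne₂ : L ≠ L₂) (pr : AddedV F m),
    pr.1.1 = L →
    flow L L₁ hL h₁ hne₁ (Sum.inr pr) (Sum.inl pr.1.2) =
      flow L L₂ hL h₂ hne₂ (Sum.inr pr) (Sum.inl pr.1.2)
  fb3_in : ∀ (L L₁ L₂ : Set (Word S m)) (hL : L ∈ scriptL F m) (h₁ : L₁ ∈ scriptL F m)
    (h₂ : L₂ ∈ scriptL F m) (hne₁ : L₁ ≠ L) (hne₂ : L₂ ≠ L) (pr : AddedV F m),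
    pr.1.1 = L →
    flow L₁ L h₁ hL hne₁ (Sum.inl pr.1.2) (Sum.inr pr) =
      flow L₂ L h₂ hL hne₂ (Sum.inl pr.1.2) (Sum.inr pr)
  fb4_flip : ∀ (t : T) (b : Bool) (h₁ : IsetW F t b m ∈ scriptL F m)
    (h₂ : IsetW F t (!b) m ∈ scriptL F m) (hne : IsetW F t b m ≠ IsetW F t (!b) m)
    (pr qr : AddedV F m), pr.1.1 = IsetW F t b m → qr.1.1 = IsetW F t (!b) m →
    qr.1.2 = (fun i => (ηfam t).hom.toFun (pr.1.2 i)) →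
    flow (IsetW F t b m) (IsetW F t (!b) m) h₁ h₂ hne (Sum.inr pr) (Sum.inl pr.1.2) =
      flow (IsetW F t b m) (IsetW F t (!b) m) h₁ h₂ hne (Sum.inl qr.1.2) (Sum.inr qr)
  fb4_sym : ∀ (t : T) (b : Bool) (h₁ : IsetW F t b m ∈ scriptL F m)
    (h₂ : IsetW F t (!b) m ∈ scriptL F m) (hne : IsetW F t b m ≠ IsetW F t (!b) m)
    (hne' : IsetW F t (!b) m ≠ IsetW F t b m) (pr : AddedV F m),
    pr.1.1 = IsetW F t b m →
    flow (IsetW F t b m) (IsetW F t (!b) m) h₁ h₂ hne (Sum.inr pr) (Sum.inl pr.1.2) =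
      flow (IsetW F t (!b) m) (IsetW F t b m) h₂ h₁ hne' (Sum.inl pr.1.2) (Sum.inr pr)

/-- The `q`-energy of a flow basis: the maximal energy of its members. -/
noncomputable def basisEnergy [Nonempty T] {F : System S T} {ηfam : T → Iso F F} {m : ℕ}
    (q : ℝ) (FB : FlowBasis F ηfam m) : ℝ :=
  sSup {e | ∃ (L₁ L₂ : Set (Word S m)) (h₁ : L₁ ∈ scriptL F m) (h₂ : L₂ ∈ scriptL F m)
    (hne : L₁ ≠ L₂), e = energy q (FB.flow L₁ L₂ h₁ h₂ hne)}

open Classical in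
/-- The twisted flow `T_α(F)` of Proposition "Twist flow". -/
noncomputable def Talpha [Nonempty T] {F : System S T} {m : ℕ} (R : ReflData F)
    (L₁ L₂' : Set (Word S m)) (A : TildeV F m ≃ TildeV F m)
    (Φ : TildeV F m → TildeV F m → ℝ) : TildeV F m → TildeV F m → ℝ := fun x y =>
  if (∃ w, x = Sum.inl w ∧ wordMap R w = w) ∧ (∃ w, y = Sum.inl w ∧ wordMap R w = w) then
    Φ x y
  else if ((∃ w, x = Sum.inl w ∧ w ∈ liftC R m) ∨
        (∃ pr : AddedV F m, x = Sum.inr pr ∧ (pr.1.1 = L₁ ∨ pr.1.1 = L₂'))) ∨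
      ((∃ w, y = Sum.inl w ∧ w ∈ liftC R m) ∨
        (∃ pr : AddedV F m, y = Sum.inr pr ∧ (pr.1.1 = L₁ ∨ pr.1.1 = L₂'))) then
    Φ x y + Φ (A.symm x) (A.symm y)
  else 0

end IGSP
namespace IGSP

/-- The symbol set of the ambient cubical system: `{1,…,L}^d × {1,…,s}` (0-indexed). -/
abbrev CSym (d L s : ℕ) := (Fin d → Fin L) × Fin s

/-- The ambient edge relation of type `t_j`. -/
def ambE {d L s : ℕ} (j : Fin d) (w v : CSym d L s) : Prop :=
  (∀ i, i ≠ j → w.1 i = v.1 i) ∧ (v.1 j : ℕ) = (w.1 j : ℕ) + 1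

/-- The ambient gluing rule of type `t_j`. -/
def ambI {d L s : ℕ} (j : Fin d) (w v : CSym d L s) : Prop :=
  (∀ i, i ≠ j → w.1 i = v.1 i) ∧ (w.1 j : ℕ) = L - 1 ∧ (v.1 j : ℕ) = 0 ∧ w.2 = v.2

/-- A symbol lying on the `j`-axis edge of the cube: all other coordinates extremal
and label `1`. -/
def onAxis {d L s : ℕ} (j : Fin d) (w : CSym d L s) : Prop :=
  (∀ i, i ≠ j → ((w.1 i : ℕ) = 0 ∨ (w.1 i : ℕ) = L - 1)) ∧ (w.2 : ℕ) = 0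

/-- The coordinate reflection `η_j : c_j ↦ L + 1 - c_j`. -/
def etaMap {d L s : ℕ} (j : Fin d) (w : CSym d L s) : CSym d L s :=
  ⟨fun i => if i = j then ⟨L - 1 - (w.1 j : ℕ), by have := (w.1 j).isLt; omega⟩ else w.1 i,
    w.2⟩

/-- The diagonal reflection `α_{j,k}^+` exchanging coordinates `j` and `k`. -/
def swapMap {d L s : ℕ} (j k : Fin d) (w : CSym d L s) : CSym d L s :=
  ⟨fun i => if i = j then w.1 k else if i = k then w.1 j else w.1 i, w.2⟩

/-- The anti-diagonal reflection `α_{j,k}^-`. -/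
def aswapMap {d L s : ℕ} (j k : Fin d) (w : CSym d L s) : CSym d L s :=
  ⟨fun i =>
    if i = j then ⟨L - 1 - (w.1 k : ℕ), by have := (w.1 k).isLt; omega⟩
    else if i = k then ⟨L - 1 - (w.1 j : ℕ), by have := (w.1 j).isLt; omega⟩
    else w.1 i, w.2⟩

/-- A cubical iterated graph system: a sub-system of the ambient system `𝔉(d,L,s)`
satisfying the conditions (C1)–(C4). -/
structure CubicalIGS (d L s : ℕ) where
  hd : 1 ≤ d
  hL : 3 ≤ L
  hs : 1 ≤ s
  Symb : Set (CSym d L s)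
  sys : System (↥Symb) (Fin d)
  edge_amb : ∀ x y : ↥Symb, sys.E x y → ambE (sys.typ x y) x.1 y.1
  glue_amb : ∀ (j : Fin d) (x y : ↥Symb), sys.glue j x y → ambI j x.1 y.1
  C1 : ∀ w : CSym d L s, (∃ j, onAxis j w) → w ∈ Symb
  C2 : ∀ (j : Fin d) (x y : ↥Symb), onAxis j x.1 → onAxis j y.1 → ambE j x.1 y.1 →
    sys.E x y
  C3 : ∀ (j : Fin d) (x y : ↥Symb), onAxis j x.1 → onAxis j y.1 → ambI j x.1 y.1 →
    sys.glue j x y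
  C4_eta : ∀ j : Fin d, ∃ ψ : Iso sys sys,
    ∀ x : ↥Symb, (ψ.hom.toFun x : CSym d L s) = etaMap j x.1
  C4_plus : ∀ j k : Fin d, j ≠ k → ∃ ψ : Iso sys sys,
    ∀ x : ↥Symb, (ψ.hom.toFun x : CSym d L s) = swapMap j k x.1
  C4_minus : ∀ j k : Fin d, j ≠ k → ∃ ψ : Iso sys sys,
    ∀ x : ↥Symb, (ψ.hom.toFun x : CSym d L s) = aswapMap j k x.1

/-- The corner symbol `𝐤`: first coordinate `k`, all other coordinates `1`, label `1`. -/
def cornerSym {d L s : ℕ} (cub : CubicalIGS d L s) (k : Fin L) : ↥cub.Symb :=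
  ⟨⟨fun i => if (i : ℕ) = 0 then k else ⟨0, by have := k.isLt; omega⟩,
      ⟨0, by have := cub.hs; omega⟩⟩, by
    apply cub.C1
    refine ⟨⟨0, cub.hd⟩, fun i hi => ?_, rfl⟩
    have hiv : (i : ℕ) ≠ 0 := fun h => hi (Fin.ext h)
    left
    simp [hiv]⟩

end IGSP
namespace IGSP

/-- The edge relation of the Sierpiński gasket IGS. -/
abbrev gasketE (x y : Fin 3) : Prop :=
  (x = 0 ∧ y = 1) ∨ (x = 1 ∧ y = 2) ∨ (x = 0 ∧ y = 2)

/-- The Sierpiński gasket iterated graph system. -/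
noncomputable def gasket : System (Fin 3) (Fin 3) where
  E := gasketE
  not_both := by decide
  irrefl := by decide
  conn := by
    have hadj : ∀ a b : Fin 3, a ≠ b → gasketE a b ∨ gasketE b a := by decide
    intro x y
    rcases eq_or_ne x y with rfl | h
    · exact Relation.ReflTransGen.refl
    · exact Relation.ReflTransGen.single (hadj x y h)
  typ := fun x y => if x = 0 ∧ y = 1 then 0 else if x = 1 ∧ y = 2 then 1 else 2
  typ_surj := by decide
  glue := fun t x y =>
    (t = 0 ∧ x = 1 ∧ y = 0) ∨ (t = 1 ∧ x = 2 ∧ y = 1) ∨ (t = 2 ∧ x = 2 ∧ y = 0)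
  glue_nonempty := by decide

open Fin.NatCast in
/-- The pentagonal Sierpiński carpet iterated graph system. -/
noncomputable def pentagon : System (Fin 5) (Fin 5) where
  E := fun x y => y = x + 1
  not_both := by decide
  irrefl := by decide
  conn := by
    intro x y
    have key : ∀ (k : ℕ) (z : Fin 5),
        Relation.ReflTransGen (fun a b : Fin 5 => b = a + 1 ∨ a = b + 1) z (z + (k : Fin 5)) := by
      intro k
      induction k with
      | zero => intro z; simpa using Relation.ReflTransGen.refl
      | succ n ih =>
          intro z
          have h : ((n + 1 : ℕ) : Fin 5) = ((n : ℕ) : Fin 5) + 1 := by push_cast; ring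
          rw [h, ← add_assoc]
          exact (ih z).tail (Or.inl rfl)
    have h2 := key ((y - x : Fin 5) : ℕ) x
    rw [Fin.cast_val_eq_self] at h2
    have h3 : x + (y - x) = y := by abel
    rwa [h3] at h2
  typ := fun x _ => x
  typ_surj := fun t => ⟨t, t + 1, rfl, rfl⟩
  glue := fun t x y => (x = t + 1 ∧ y = t) ∨ (x = t + 2 ∧ y = t + 4)
  glue_nonempty := fun t => ⟨t + 1, t, Or.inl ⟨rfl, rfl⟩⟩

/-- The interval iterated graph system `𝔉(1, L)`. -/
noncomputable def intervalSys (L : ℕ) (hL : 3 ≤ L) : System (Fin L) Unit where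
  E x y := (y : ℕ) = (x : ℕ) + 1
  not_both := by intro x y h h'; omega
  irrefl := by intro x h; omega
  conn := by
    have key : ∀ (k : ℕ) (hk : k < L),
        Relation.ReflTransGen (fun a b : Fin L => ((b : ℕ) = (a : ℕ) + 1) ∨ ((a : ℕ) = (b : ℕ) + 1))
          ⟨0, by omega⟩ ⟨k, hk⟩ := by
      intro k
      induction k with
      | zero => intro hk; exact Relation.ReflTransGen.refl
      | succ n ih =>
          intro hk
          exact Relation.ReflTransGen.tail (ih (by omega)) (Or.inl rfl)
    intro x y
    have hsymm : Symmetric fun a b : Fin L => ((b : ℕ) = (a : ℕ) + 1) ∨ ((a : ℕ) = (b : ℕ) + 1) :=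
      fun a b h => h.symm
    have hx := key x.val x.isLt
    have hy := key y.val y.isLt
    simp only [Fin.eta] at hx hy
    exact Relation.ReflTransGen.trans ((@Relation.ReflTransGen.stdSymm _ _ ⟨fun a b h => hsymm h⟩).symm _ _ hx) hy
  typ := fun _ _ => ()
  typ_surj := by
    intro t
    refine ⟨⟨0, by omega⟩, ⟨1, by omega⟩, rfl, ?_⟩
    cases t; rfl
  glue := fun _ x y => (x : ℕ) = L - 1 ∧ (y : ℕ) = 0
  glue_nonempty := fun _ => ⟨⟨L - 1, by omega⟩, ⟨0, by omega⟩, rfl, rfl⟩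

variable {S T : Type}

/-- A folding of `G_{k+n}` onto `w̃ · W_n`: a graph mapping into the induced subgraph on
`w̃ · W_n` which fixes `w̃ · W_n` pointwise. -/
def HasFolding [Nonempty T] (F : System S T) (k n : ℕ) (wt : Word S k) : Prop :=
  ∃ f : Word S (k + n) → Word S (k + n),
    (∀ x, ∃ u : Word S n, f x = Fin.append wt u) ∧
    (∀ u : Word S n, f (Fin.append wt u) = Fin.append wt u) ∧
    (∀ x y, adjW F (k + n) x y → f x = f y ∨ adjW F (k + n) (f x) (f y))

end IGSP

namespace IGSP

section Statement17Aux

open Classical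

variable {S T : Type}

/-! ### Fin.append plumbing -/

theorem append_val {n m : ℕ} (u : Word S n) (a : Word S m) (k : Fin (n + m)) :
    Fin.append u a k = if h : (k : ℕ) < n then u ⟨k, h⟩ else a ⟨(k : ℕ) - n, by omega⟩ := by
  induction k using Fin.addCases with
  | left j =>
      have hj : ((Fin.castAdd m j : Fin (n+m)) : ℕ) = (j : ℕ) := rfl
      rw [Fin.append_left, dif_pos (by rw [hj]; exact j.isLt)]
      exact congrArg u (Fin.ext hj.symm)
  | right j =>
      have hj : ((Fin.natAdd n j : Fin (n+m)) : ℕ) = n + (j : ℕ) := rfl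
      rw [Fin.append_right, dif_neg (by omega)]
      congr 1
      ext
      simp

theorem append_left_right {n m : ℕ} (x : Word S (n + m)) :
    Fin.append (fun i => x (Fin.castAdd m i)) (fun j => x (Fin.natAdd n j)) = x := by
  funext k
  induction k using Fin.addCases with
  | left j => rw [Fin.append_left]
  | right j => rw [Fin.append_right]

theorem append_inj_left {n m : ℕ} {u u' : Word S n} {a b : Word S m}
    (h : Fin.append u a = Fin.append u' b) : u = u' := by
  funext i
  have := congrFun h (Fin.castAdd m i)
  rwa [Fin.append_left, Fin.append_left] at this

theorem append_inj_right {n m : ℕ} {u u' : Word S n} {a b : Word S m}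
    (h : Fin.append u a = Fin.append u' b) : a = b := by
  funext i
  have := congrFun h (Fin.natAdd n i)
  rwa [Fin.append_right, Fin.append_right] at this

theorem append_nil {n : ℕ} (u : Word S n) (a : Word S 0) :
    Fin.append u a = u := by
  funext k
  rw [append_val, dif_pos (show (k : ℕ) < n from k.isLt)]
  exact congrArg u (Fin.ext rfl)

theorem init_append {n m : ℕ} (u : Word S n) (a : Word S (m + 1)) :
    Fin.init (n := n + m) (Fin.append u a : Word S (n + (m + 1))) = Fin.append u (Fin.init a) := by
  funext k
  show Fin.append u a (Fin.castSucc k) = _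
  rw [append_val, append_val]
  simp only [Fin.coe_castSucc]
  by_cases h : (k : ℕ) < n
  · rw [dif_pos h, dif_pos h]
  · rw [dif_neg h, dif_neg h]
    exact congrArg a (Fin.ext rfl)

theorem append_last {n m : ℕ} (u : Word S n) (a : Word S (m + 1)) :
    Fin.append u a (Fin.last (n + m)) = a (Fin.last m) := by
  rw [append_val, dif_neg (by simp)]
  congr 1
  ext
  simp [Fin.last]

/-! ### Edge structure of replacement graphs -/

variable [Nonempty T] (F : System S T)

theorem edge_zero (w v : Word S 0) : ¬ edge F 0 w v := by
  simp [edge, replData]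

theorem edge_one (w v : Word S 1) : edge F 1 w v ↔ F.E (w 0) (v 0) := by
  simp [edge, replData]

theorem etyp_one (w v : Word S 1) : etyp F 1 w v = F.typ (w 0) (v 0) := by
  simp [etyp, replData]

theorem edge_succ {L : ℕ} (hL : 1 ≤ L) (w v : Word S (L + 1)) :
    edge F (L + 1) w v ↔
      ((Fin.init w = Fin.init v ∧ F.E (w (Fin.last L)) (v (Fin.last L))) ∨
        (edge F L (Fin.init w) (Fin.init v) ∧
          F.glue (etyp F L (Fin.init w) (Fin.init v)) (w (Fin.last L)) (v (Fin.last L)))) := by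
  obtain ⟨K, rfl⟩ : ∃ K, L = K + 1 := ⟨L - 1, by omega⟩
  simp [edge, etyp, replData]

theorem etyp_succ {L : ℕ} (hL : 1 ≤ L) (w v : Word S (L + 1)) :
    etyp F (L + 1) w v =
      if Fin.init w = Fin.init v then F.typ (w (Fin.last L)) (v (Fin.last L))
      else etyp F L (Fin.init w) (Fin.init v) := by
  obtain ⟨K, rfl⟩ : ∃ K, L = K + 1 := ⟨L - 1, by omega⟩
  simp [etyp, replData]

theorem edge_irrefl : ∀ (L : ℕ) (w : Word S L), ¬ edge F L w w := by
  intro L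
  induction L using Nat.strong_induction_on with
  | _ L ih =>
    match L with
    | 0 => exact fun w => edge_zero F w w
    | 1 => intro w h; exact F.irrefl _ ((edge_one F w w).1 h)
    | (K + 2) =>
        intro w h
        rcases (edge_succ F (by omega) w w).1 h with ⟨_, h2⟩ | ⟨h1, _⟩
        · exact F.irrefl _ h2
        · exact ih (K + 1) (by omega) _ h1

theorem edge_asymm : ∀ (L : ℕ) (w v : Word S L), edge F L w v → ¬ edge F L v w := by
  intro L
  induction L using Nat.strong_induction_on with
  | _ L ih =>
    match L with
    | 0 => exact fun w v h => absurd h (edge_zero F w v)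
    | 1 => intro w v h h'; exact F.not_both _ _ ((edge_one F w v).1 h) ((edge_one F v w).1 h')
    | (K + 2) =>
        intro w v h h'
        rcases (edge_succ F (by omega) w v).1 h with ⟨e1, e2⟩ | ⟨e1, e2⟩ <;>
          rcases (edge_succ F (by omega) v w).1 h' with ⟨f1, f2⟩ | ⟨f1, f2⟩
        · exact F.not_both _ _ e2 f2
        · exact edge_irrefl F (K + 1) _ (e1 ▸ f1)
        · exact edge_irrefl F (K + 1) _ (f1 ▸ e1)
        · exact ih (K + 1) (by omega) _ _ e1 f1

/-- Inner edges: edges inside a copy `u · W_m` correspond to edges of `G_m`. -/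
theorem edge_append_same {n : ℕ} (hn : 1 ≤ n) :
    ∀ (m : ℕ), 1 ≤ m → ∀ (u : Word S n) (a b : Word S m),
      (edge F (n + m) (Fin.append u a) (Fin.append u b) ↔ edge F m a b) ∧
      (edge F m a b →
        etyp F (n + m) (Fin.append u a) (Fin.append u b) = etyp F m a b) := by
  intro m
  induction m with
  | zero => omega
  | succ m ih =>
    intro _ u a b
    have hnm : 1 ≤ n + m := by omega
    have key := edge_succ F (L := n + m) hnm (Fin.append u a : Word S (n + (m + 1))) (Fin.append u b : Word S (n + (m + 1)))
    have keyt := etyp_succ F (L := n + m) hnm (Fin.append u a : Word S (n + (m + 1))) (Fin.append u b : Word S (n + (m + 1)))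
    rw [init_append u a, init_append u b, append_last u a, append_last u b] at key keyt
    rcases Nat.eq_zero_or_pos m with rfl | hm
    · -- base case m = 0, words of length 1
      rw [append_nil, append_nil] at key keyt
      constructor
      · refine key.trans ?_
        rw [edge_one F a b]
        constructor
        · rintro (⟨-, h⟩ | ⟨h, -⟩)
          · convert h using 2 <;> exact congrArg _ (Fin.ext rfl)
          · exact absurd h (edge_irrefl F n u)
        · intro h
          left
          refine ⟨rfl, ?_⟩
          convert h using 2 <;> exact Fin.ext rfl
      · intro hE
        refine keyt.trans ?_
        rw [if_pos rfl, etyp_one F a b]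
        congr 1 <;> exact congrArg _ (Fin.ext rfl)
    · -- inductive step, m ≥ 1
      obtain ⟨IH1, IH2⟩ := ih hm u (Fin.init a) (Fin.init b)
      have hiff : Fin.append u (Fin.init a) = Fin.append u (Fin.init b) ↔
          Fin.init a = Fin.init b :=
        ⟨fun h => append_inj_right h, fun h => by rw [h]⟩
      constructor
      · refine key.trans ?_
        rw [edge_succ F hm a b]
        constructor
        · rintro (⟨h1, h2⟩ | ⟨h1, h2⟩)
          · exact Or.inl ⟨hiff.1 h1, h2⟩
          · exact Or.inr ⟨IH1.1 h1, by rwa [IH2 (IH1.1 h1)] at h2⟩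
        · rintro (⟨h1, h2⟩ | ⟨h1, h2⟩)
          · exact Or.inl ⟨by rw [h1], h2⟩
          · exact Or.inr ⟨IH1.2 h1, by rwa [IH2 h1]⟩
      · intro hE
        refine keyt.trans ?_
        rw [etyp_succ F hm a b]
        by_cases hi : Fin.init a = Fin.init b
        · rw [if_pos hi, if_pos (hiff.2 hi)]
        · rw [if_neg hi, if_neg (fun h => hi (hiff.1 h))]
          apply IH2
          rcases (edge_succ F hm a b).1 hE with ⟨h1, -⟩ | ⟨h1, -⟩
          · exact absurd h1 hi
          · exact h1

/-- Cross edges: edges between distinct copies `u · W_m`, `u' · W_m`. -/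
theorem edge_append_ne {n : ℕ} (hn : 1 ≤ n) :
    ∀ (m : ℕ) (u u' : Word S n), u ≠ u' → ∀ (a b : Word S m),
      (edge F (n + m) (Fin.append u a) (Fin.append u' b) ↔
        edge F n u u' ∧ ∀ i, F.glue (etyp F n u u') (a i) (b i)) ∧
      (etyp F (n + m) (Fin.append u a) (Fin.append u' b) = etyp F n u u') := by
  intro m
  induction m with
  | zero =>
    intro u u' hne a b
    rw [append_nil u a, append_nil u' b]
    exact ⟨⟨fun h => ⟨h, fun i => i.elim0⟩, fun h => h.1⟩, rfl⟩
  | succ m ih =>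
    intro u u' hne a b
    have hnm : 1 ≤ n + m := by omega
    obtain ⟨IH1, IH2⟩ := ih u u' hne (Fin.init a) (Fin.init b)
    have key := edge_succ F (L := n + m) hnm (Fin.append u a : Word S (n + (m + 1))) (Fin.append u' b : Word S (n + (m + 1)))
    have keyt := etyp_succ F (L := n + m) hnm (Fin.append u a : Word S (n + (m + 1))) (Fin.append u' b : Word S (n + (m + 1)))
    rw [init_append u a, init_append u' b, append_last u a, append_last u' b] at key keyt
    have hnei : Fin.append u (Fin.init a) ≠ Fin.append u' (Fin.init b) := by
      intro h; exact hne (append_inj_left h)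
    constructor
    · refine key.trans ?_
      constructor
      · rintro (⟨h1, -⟩ | ⟨h1, h2⟩)
        · exact absurd h1 hnei
        · obtain ⟨he, hg⟩ := IH1.1 h1
          refine ⟨he, fun i => ?_⟩
          induction i using Fin.lastCases with
          | last => rwa [IH2] at h2
          | cast j => exact hg j
      · rintro ⟨he, hg⟩
        right
        refine ⟨IH1.2 ⟨he, fun i => hg (Fin.castSucc i)⟩, ?_⟩
        rw [IH2]
        exact hg (Fin.last m)
    · refine keyt.trans ?_
      rw [if_neg hnei, IH2]

end Statement17Aux
section Statement17Aux2

open Classical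

variable {S T : Type} [Fintype S] [Nonempty T] {F : System S T} {m : ℕ}

noncomputable instance fintypeAddedV : Fintype (AddedV F m) := by
  unfold AddedV; infer_instance

noncomputable instance fintypeTildeV : Fintype (TildeV F m) := by
  unfold TildeV; infer_instance

/-- The coordinatewise flip map. -/
def etaW (ηfam : T → Iso F F) (t : T) (w : Word S m) : Word S m :=
  fun i => (ηfam t).hom.toFun (w i)

variable {ηfam : T → Iso F F}

theorem mem_IsetW_flip (hflip : ∀ t, IsFlip F t (ηfam t)) {t : T} {b : Bool}
    {w : Word S m} (hw : w ∈ IsetW F t b m) : etaW ηfam t w ∈ IsetW F t (!b) m := by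
  intro i
  cases b with
  | true => exact ⟨w i, (hflip t).1 (w i) (hw i)⟩
  | false => exact ⟨w i, (hflip t).2 (w i) (hw i)⟩

theorem etaW_invol (hGR : GR F) (hflip : ∀ t, IsFlip F t (ηfam t)) {t : T} {b : Bool}
    {w : Word S m} (hw : w ∈ IsetW F t b m) : etaW ηfam t (etaW ηfam t w) = w := by
  funext i
  have hwi := hw i
  cases b with
  | true =>
      have h1 : F.glue t (w i) ((ηfam t).hom.toFun (w i)) := (hflip t).1 (w i) hwi
      have h2 : F.glue t ((ηfam t).hom.toFun ((ηfam t).hom.toFun (w i)))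
          ((ηfam t).hom.toFun (w i)) := (hflip t).2 _ ⟨w i, h1⟩
      exact (hGR.1 t ((ηfam t).hom.toFun (w i))).2 h2 h1
  | false =>
      have h1 : F.glue t ((ηfam t).hom.toFun (w i)) (w i) := (hflip t).2 (w i) hwi
      have h2 : F.glue t ((ηfam t).hom.toFun (w i))
          ((ηfam t).hom.toFun ((ηfam t).hom.toFun (w i))) := (hflip t).1 _ ⟨w i, h1⟩
      exact (hGR.1 t ((ηfam t).hom.toFun (w i))).1 h2 h1

theorem Iset_nonempty (F : System S T) (t : T) (b : Bool) : ∃ s, s ∈ Iset F t b := by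
  obtain ⟨x, y, hxy⟩ := F.glue_nonempty t
  cases b with
  | true => exact ⟨x, y, hxy⟩
  | false => exact ⟨y, x, hxy⟩

theorem IsetW_nonempty (F : System S T) (t : T) (b : Bool) (m : ℕ) :
    ∃ w, w ∈ IsetW F t b m :=
  ⟨fun _ => Classical.choose (Iset_nonempty F t b),
    fun _ => Classical.choose_spec (Iset_nonempty F t b)⟩

theorem Iset_disj (hGR : GR F) (t : T) (b : Bool) (s : S) (h1 : s ∈ Iset F t b)
    (h2 : s ∈ Iset F t (!b)) : False := by
  have := hGR.2.2 t
  cases b with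
  | true => exact Set.eq_empty_iff_forall_notMem.1 this s ⟨h2, h1⟩
  | false => exact Set.eq_empty_iff_forall_notMem.1 this s ⟨h1, h2⟩

theorem IsetW_ne (hGR : GR F) (hm : 1 ≤ m) (t : T) (b : Bool) :
    IsetW F t b m ≠ IsetW F t (!b) m := by
  intro h
  obtain ⟨w, hw⟩ := IsetW_nonempty F t b m
  exact Iset_disj hGR t b (w ⟨0, hm⟩) (hw ⟨0, hm⟩) ((h ▸ hw) ⟨0, hm⟩)

theorem IsetW_mem_scriptL (F : System S T) [Nonempty T] (t : T) (b : Bool) (m : ℕ) :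
    IsetW F t b m ∈ scriptL F m := ⟨t, b, rfl⟩

/-- The canonical added vertex over `v ∈ I_{t,b}^{(m)}`. -/
def mkAdded (F : System S T) [Nonempty T] (t : T) (b : Bool) (v : Word S m)
    (hv : v ∈ IsetW F t b m) : AddedV F m :=
  ⟨(IsetW F t b m, v), ⟨t, b, rfl⟩, hv⟩

/-- The pendant boundary function `g_{t,b}` of the flow basis. -/
noncomputable def gfun (FB : FlowBasis F ηfam m) (t : T) (b : Bool) (v : Word S m) : ℝ :=
  if h : v ∈ IsetW F t b m ∧ IsetW F t b m ≠ IsetW F t (!b) m then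
    FB.flow (IsetW F t b m) (IsetW F t (!b) m) ⟨t, b, rfl⟩ ⟨t, !b, rfl⟩ h.2
      (Sum.inr (mkAdded F t b v h.1)) (Sum.inl v)
  else 0

theorem gfun_zero (FB : FlowBasis F ηfam m) {t : T} {b : Bool} {v : Word S m}
    (hv : v ∉ IsetW F t b m) : gfun FB t b v = 0 := by
  rw [gfun, dif_neg]
  exact fun h => hv h.1

theorem gout_eq (hGR : GR F) (hm : 1 ≤ m) (FB : FlowBasis F ηfam m) {t : T} {b : Bool}
    {L₂ : Set (Word S m)} (h₁ : IsetW F t b m ∈ scriptL F m) (h₂ : L₂ ∈ scriptL F m)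
    (hne : IsetW F t b m ≠ L₂) (v : Word S m)
    (hv : v ∈ IsetW F t b m) :
    FB.flow (IsetW F t b m) L₂ h₁ h₂ hne (Sum.inr (mkAdded F t b v hv)) (Sum.inl v) =
      gfun FB t b v := by
  rw [gfun, dif_pos ⟨hv, IsetW_ne hGR hm t b⟩]
  rcases eq_or_ne L₂ (IsetW F t (!b) m) with rfl | hL2
  · rfl
  · exact FB.fb3_out (IsetW F t b m) L₂ (IsetW F t (!b) m) h₁ h₂ ⟨t, !b, rfl⟩ hne
      (IsetW_ne hGR hm t b) (mkAdded F t b v hv) rfl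

theorem gin_eq (hGR : GR F) (hm : 1 ≤ m) (FB : FlowBasis F ηfam m) {t : T} {b : Bool}
    {L₁ : Set (Word S m)} (h₁ : L₁ ∈ scriptL F m) (h₂ : IsetW F t b m ∈ scriptL F m)
    (hne : L₁ ≠ IsetW F t b m) (v : Word S m)
    (hv : v ∈ IsetW F t b m) :
    FB.flow L₁ (IsetW F t b m) h₁ h₂ hne (Sum.inl v) (Sum.inr (mkAdded F t b v hv)) =
      gfun FB t b v := by
  have step1 := FB.fb3_in (IsetW F t b m) L₁ (IsetW F t (!b) m) h₂ h₁ ⟨t, !b, rfl⟩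
      hne (IsetW_ne hGR hm t b).symm (mkAdded F t b v hv) rfl
  have step2 := FB.fb4_sym t b ⟨t, b, rfl⟩ ⟨t, !b, rfl⟩ (IsetW_ne hGR hm t b)
      (IsetW_ne hGR hm t b).symm (mkAdded F t b v hv) rfl
  rw [gfun, dif_pos ⟨hv, IsetW_ne hGR hm t b⟩]
  calc FB.flow L₁ (IsetW F t b m) h₁ h₂ hne (Sum.inl v) (Sum.inr (mkAdded F t b v hv))
      = FB.flow (IsetW F t (!b) m) (IsetW F t b m) ⟨t, !b, rfl⟩ h₂
        (IsetW_ne hGR hm t b).symm (Sum.inl v) (Sum.inr (mkAdded F t b v hv)) := step1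
    _ = _ := step2.symm

theorem gfun_flip (hGR : GR F) (hm : 1 ≤ m) (hflip : ∀ t, IsFlip F t (ηfam t))
    (FB : FlowBasis F ηfam m) {t : T} {b : Bool} {v : Word S m}
    (hv : v ∈ IsetW F t b m) :
    gfun FB t b v = gfun FB t (!b) (etaW ηfam t v) := by
  have hv' : etaW ηfam t v ∈ IsetW F t (!b) m := mem_IsetW_flip hflip hv
  have h4 := FB.fb4_flip t b ⟨t, b, rfl⟩ ⟨t, !b, rfl⟩ (IsetW_ne hGR hm t b)
      (mkAdded F t b v hv) (mkAdded F t (!b) (etaW ηfam t v) hv') rfl rfl rfl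
  have hgin := gin_eq (t := t) (b := !b) hGR hm FB ⟨t, b, rfl⟩ ⟨t, !b, rfl⟩
      (IsetW_ne hGR hm t b) (etaW ηfam t v) hv'
  rw [gfun, dif_pos ⟨hv, IsetW_ne hGR hm t b⟩]
  exact h4.trans hgin

theorem fdiv_inr {Φ : TildeV F m → TildeV F m → ℝ} (hΦ : Antisym (tildeG F m) Φ)
    (pr : AddedV F m) : fdiv Φ (Sum.inr pr) = Φ (Sum.inr pr) (Sum.inl pr.1.2) := by
  unfold fdiv
  rw [finsum_eq_sum_of_fintype]
  apply Finset.sum_eq_single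
  · intro y _ hy
    apply hΦ.2
    intro hAdj
    match y, hAdj with
    | Sum.inl w, hAdj => exact hy (by rw [show pr.1.2 = w from hAdj])
    | Sum.inr _, hAdj => exact hAdj
  · intro h
    exact absurd (Finset.mem_univ _) h

/-- Reindexing a sum over added vertices with a fixed label by the word. -/
theorem sum_added_eq {L : Set (Word S m)} (hL : L ∈ scriptL F m) (f : AddedV F m → ℝ)
    (g : Word S m → ℝ) (hfg : ∀ pr : AddedV F m, pr.1.1 = L → f pr = g pr.1.2)
    (hg0 : ∀ v, v ∉ L → g v = 0) :
    ∑ pr : AddedV F m, (if pr.1.1 = L then f pr else 0) = ∑ v : Word S m, g v := by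
  classical
  rw [← Finset.sum_filter]
  rw [show (∑ v : Word S m, g v) =
      ∑ v ∈ Finset.univ.filter (fun v => v ∈ L), g v from
    (Finset.sum_subset (Finset.filter_subset _ _)
      (fun v _ hv => hg0 v (by simpa using hv))).symm]
  have hinj : ∀ x ∈ Finset.univ.filter (fun pr : AddedV F m => pr.1.1 = L),
      ∀ y ∈ Finset.univ.filter (fun pr : AddedV F m => pr.1.1 = L),
      x.1.2 = y.1.2 → x = y := by
    intro x hx y hy hxy
    simp only [Finset.mem_filter] at hx hy
    exact Subtype.ext (Prod.ext (hx.2.trans hy.2.symm) hxy)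
  have himage : (Finset.univ.filter (fun pr : AddedV F m => pr.1.1 = L)).image
      (fun pr : AddedV F m => pr.1.2) = Finset.univ.filter (fun v => v ∈ L) := by
    ext v
    simp only [Finset.mem_image, Finset.mem_filter, Finset.mem_univ, true_and]
    constructor
    · rintro ⟨pr, hpr, rfl⟩
      exact hpr ▸ pr.2.2
    · intro hv
      exact ⟨⟨(L, v), hL, hv⟩, rfl, rfl⟩
  calc ∑ pr ∈ Finset.univ.filter (fun pr : AddedV F m => pr.1.1 = L), f pr
      = ∑ pr ∈ Finset.univ.filter (fun pr : AddedV F m => pr.1.1 = L), g pr.1.2 :=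
        Finset.sum_congr rfl (fun pr hpr => hfg pr (by simpa using hpr))
    _ = ∑ v ∈ (Finset.univ.filter (fun pr : AddedV F m => pr.1.1 = L)).image
          (fun pr : AddedV F m => pr.1.2), g v := (Finset.sum_image hinj).symm
    _ = ∑ v ∈ Finset.univ.filter (fun v => v ∈ L), g v := by rw [himage]

theorem gfun_mass (hGR : GR F) (hm : 1 ≤ m) (FB : FlowBasis F ηfam m) (t : T) (b : Bool) :
    ∑ v : Word S m, gfun FB t b v = 1 := by
  classical
  have hne := IsetW_ne hGR hm t b
  have hunit := FB.flow_unit (IsetW F t b m) (IsetW F t (!b) m) ⟨t, b, rfl⟩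
      ⟨t, !b, rfl⟩ hne
  set Φ := FB.flow (IsetW F t b m) (IsetW F t (!b) m) ⟨t, b, rfl⟩ ⟨t, !b, rfl⟩ hne with hΦdef
  have hAS : Antisym (tildeG F m) Φ :=
    (FB.flow_isFlow (IsetW F t b m) (IsetW F t (!b) m) ⟨t, b, rfl⟩ ⟨t, !b, rfl⟩ hne).1
  have himg : tildeSet F m (IsetW F t b m) =
      Sum.inr '' {pr : AddedV F m | pr.1.1 = IsetW F t b m} := by
    ext x
    constructor
    · rintro ⟨pr, h1, rfl⟩; exact ⟨pr, h1, rfl⟩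
    · rintro ⟨pr, h1, rfl⟩; exact ⟨pr, h1, rfl⟩
  have hunit' : ∑ pr : AddedV F m,
      {pr : AddedV F m | pr.1.1 = IsetW F t b m}.indicator
        (fun pr => fdiv Φ (Sum.inr pr)) pr = 1 := by
    rw [← finsum_eq_sum_of_fintype, ← finsum_mem_def]
    rw [himg] at hunit
    exact (finsum_mem_image (f := fdiv Φ) (Sum.inr_injective.injOn)).symm.trans hunit
  rw [← hunit']
  symm
  have : ∀ pr : AddedV F m,
      {pr : AddedV F m | pr.1.1 = IsetW F t b m}.indicator (fun pr => fdiv Φ (Sum.inr pr)) pr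
        = if pr.1.1 = IsetW F t b m then fdiv Φ (Sum.inr pr) else 0 :=
    fun pr => Set.indicator_apply _ _ _
  rw [Finset.sum_congr rfl (fun pr _ => this pr)]
  apply sum_added_eq (IsetW_mem_scriptL F t b m)
  · rintro ⟨⟨L', v⟩, hL', hv'⟩ hpr
    simp only at hpr
    subst hpr
    erw [fdiv_inr hAS]
    exact gout_eq hGR hm FB ⟨t, b, rfl⟩ ⟨t, !b, rfl⟩ hne v hv'
  · exact fun v hv => gfun_zero FB hv

end Statement17Aux2
section Statement17Aux3

open Classical

variable {S T : Type} [Fintype S] [Nonempty T] {F : System S T} {m : ℕ}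
variable {ηfam : T → Iso F F}

theorem flow_congr (FB : FlowBasis F ηfam m) {L₁ L₁' L₂ : Set (Word S m)}
    (hL : L₁ = L₁') (h₁ : L₁ ∈ scriptL F m) (h₁' : L₁' ∈ scriptL F m)
    (h₂ : L₂ ∈ scriptL F m) (hne : L₁ ≠ L₂) (hne' : L₁' ≠ L₂)
    {x x' y y' : TildeV F m} (hx : x = x') (hy : y = y') :
    FB.flow L₁ L₂ h₁ h₂ hne x y = FB.flow L₁' L₂ h₁' h₂ hne' x' y' := by
  subst hL hx hy
  rfl

theorem gfun_congr_set (hGR : GR F) (hm : 1 ≤ m) (FB : FlowBasis F ηfam m)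
    {t t' : T} {b b' : Bool} (h : IsetW F t b m = IsetW F t' b' m) (v : Word S m) :
    gfun FB t b v = gfun FB t' b' v := by
  by_cases hv : v ∈ IsetW F t b m
  · have hv' : v ∈ IsetW F t' b' m := h ▸ hv
    have hne1 : IsetW F t b m ≠ IsetW F t' (!b') m := by
      rw [h]; exact IsetW_ne hGR hm t' b'
    rw [← gout_eq hGR hm FB ⟨t, b, rfl⟩ ⟨t', !b', rfl⟩ hne1 v hv,
      ← gout_eq hGR hm FB ⟨t', b', rfl⟩ ⟨t', !b', rfl⟩ (IsetW_ne hGR hm t' b') v hv']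
    exact flow_congr FB h _ _ _ _ _
      (congrArg Sum.inr (Subtype.ext (Prod.ext h rfl) :
        mkAdded F t b v hv = mkAdded F t' b' v hv')) rfl
  · have hv' : v ∉ IsetW F t' b' m := h ▸ hv
    rw [gfun_zero FB hv, gfun_zero FB hv']

/-- Restriction to `G_m` of the basis flow from `I_{t,b}` to the reference `I_{t₀,+}`. -/
noncomputable def Rres (FB : FlowBasis F ηfam m) (t₀ t : T) (b : Bool) :
    Word S m → Word S m → ℝ :=
  if h : IsetW F t b m ≠ IsetW F t₀ true m then
    fun a c => FB.flow (IsetW F t b m) (IsetW F t₀ true m) ⟨t, b, rfl⟩ ⟨t₀, true, rfl⟩ h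
      (Sum.inl a) (Sum.inl c)
  else 0

theorem Rres_antisym (FB : FlowBasis F ηfam m) (t₀ t : T) (b : Bool) (a c : Word S m) :
    Rres FB t₀ t b a c = - Rres FB t₀ t b c a := by
  rw [Rres]
  split
  · next h =>
      exact ((FB.flow_isFlow _ _ ⟨t, b, rfl⟩ ⟨t₀, true, rfl⟩ h).1).1 _ _
  · simp

theorem Rres_support (FB : FlowBasis F ηfam m) (t₀ t : T) (b : Bool) {a c : Word S m}
    (h : ¬ (replGraph F m).Adj a c) : Rres FB t₀ t b a c = 0 := by
  rw [Rres]
  split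
  · next h' =>
      apply ((FB.flow_isFlow _ _ ⟨t, b, rfl⟩ ⟨t₀, true, rfl⟩ h').1).2
      intro hAdj
      exact h ⟨hAdj.1, hAdj.2⟩
  · simp

theorem sum_added_ite (L : Set (Word S m)) (v : Word S m) (c : ℝ) :
    ∑ pr : AddedV F m, (if pr.1.1 = L ∧ pr.1.2 = v then c else 0) =
      if v ∈ L ∧ L ∈ scriptL F m then c else 0 := by
  by_cases h : v ∈ L ∧ L ∈ scriptL F m
  · rw [if_pos h]
    have hz : ∀ pr ∈ Finset.univ, pr ≠ (⟨(L, v), h.2, h.1⟩ : AddedV F m) →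
        (if pr.1.1 = L ∧ pr.1.2 = v then c else 0) = 0 := by
      intro pr _ hne
      rw [if_neg]
      rintro ⟨h1, h2⟩
      exact hne (Subtype.ext (Prod.ext h1 h2))
    exact (Finset.sum_eq_single _ hz (fun h' => absurd (Finset.mem_univ _) h')).trans
      (if_pos ⟨rfl, rfl⟩)
  · rw [if_neg h]
    apply Finset.sum_eq_zero
    intro pr _
    rw [if_neg]
    rintro ⟨h1, h2⟩
    exact h ⟨h1 ▸ h2 ▸ pr.2.2, h1 ▸ pr.2.1⟩

theorem Rres_div (hGR : GR F) (hm : 1 ≤ m) (FB : FlowBasis F ηfam m) (t₀ t : T)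
    (b : Bool) (v : Word S m) :
    ∑ c : Word S m, Rres FB t₀ t b v c = gfun FB t b v - gfun FB t₀ true v := by
  by_cases h : IsetW F t b m ≠ IsetW F t₀ true m
  swap
  · -- degenerate: the two sets coincide, `Rres = 0` and `g`'s agree
    push_neg at h
    rw [gfun_congr_set hGR hm FB h v]
    simp only [Rres, dif_neg (not_not.2 h)]
    simp
  · have hIF := FB.flow_isFlow (IsetW F t b m) (IsetW F t₀ true m) ⟨t, b, rfl⟩
      ⟨t₀, true, rfl⟩ h
    have hLHS : ∑ c : Word S m, Rres FB t₀ t b v c =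
        ∑ c : Word S m, (FB.flow (IsetW F t b m) (IsetW F t₀ true m) ⟨t, b, rfl⟩ ⟨t₀, true, rfl⟩ h) (Sum.inl v) (Sum.inl c) := by
      apply Finset.sum_congr rfl
      intro c _
      rw [Rres, dif_pos h]
    have h0 : fdiv (FB.flow (IsetW F t b m) (IsetW F t₀ true m) ⟨t, b, rfl⟩ ⟨t₀, true, rfl⟩ h) (Sum.inl v) = 0 := by
      apply hIF.2
      rintro (⟨pr, h1, hx⟩ | ⟨pr, h1, hx⟩) <;> exact Sum.inl_ne_inr hx
    unfold fdiv at h0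
    rw [finsum_eq_sum_of_fintype] at h0
    have hsplit : ∑ y : TildeV F m, (FB.flow (IsetW F t b m) (IsetW F t₀ true m) ⟨t, b, rfl⟩ ⟨t₀, true, rfl⟩ h) (Sum.inl v) y =
        ∑ c : Word S m, (FB.flow (IsetW F t b m) (IsetW F t₀ true m) ⟨t, b, rfl⟩ ⟨t₀, true, rfl⟩ h) (Sum.inl v) (Sum.inl c) +
          ∑ pr : AddedV F m, (FB.flow (IsetW F t b m) (IsetW F t₀ true m) ⟨t, b, rfl⟩ ⟨t₀, true, rfl⟩ h) (Sum.inl v) (Sum.inr pr) :=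
      Fintype.sum_sum_type _
    have hpoint : ∀ pr : AddedV F m, (FB.flow (IsetW F t b m) (IsetW F t₀ true m) ⟨t, b, rfl⟩ ⟨t₀, true, rfl⟩ h) (Sum.inl v) (Sum.inr pr) =
        (if pr.1.1 = IsetW F t b m ∧ pr.1.2 = v then -gfun FB t b v else 0) +
        (if pr.1.1 = IsetW F t₀ true m ∧ pr.1.2 = v then gfun FB t₀ true v else 0) := by
      intro pr
      by_cases hv2 : pr.1.2 = v
      · obtain ⟨⟨L', w⟩, hL', hw⟩ := pr
        simp only at hv2
        subst hv2
        by_cases hA : L' = IsetW F t b m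
        · subst hA
          rw [if_pos ⟨rfl, rfl⟩, if_neg (fun hc => h hc.1), add_zero]
          have h1 : FB.flow (IsetW F t b m) (IsetW F t₀ true m) ⟨t, b, rfl⟩
              ⟨t₀, true, rfl⟩ h
              (Sum.inr (⟨(IsetW F t b m, w), hL', hw⟩ : AddedV F m)) (Sum.inl w) =
              gfun FB t b w :=
            gout_eq hGR hm FB ⟨t, b, rfl⟩ ⟨t₀, true, rfl⟩ h w hw
          rw [(hIF.1).1 (Sum.inl w)
            (Sum.inr (⟨(IsetW F t b m, w), hL', hw⟩ : AddedV F m)), h1]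
        · by_cases hB : L' = IsetW F t₀ true m
          · subst hB
            rw [if_neg (fun hc => hA hc.1), if_pos ⟨rfl, rfl⟩, zero_add]
            have h2 : FB.flow (IsetW F t b m) (IsetW F t₀ true m) ⟨t, b, rfl⟩
                ⟨t₀, true, rfl⟩ h (Sum.inl w)
                (Sum.inr (⟨(IsetW F t₀ true m, w), hL', hw⟩ : AddedV F m)) =
                gfun FB t₀ true w :=
              gin_eq (t := t₀) (b := true) hGR hm FB ⟨t, b, rfl⟩ ⟨t₀, true, rfl⟩ h w hw
            exact h2
          · rw [if_neg (fun hc => hA hc.1), if_neg (fun hc => hB hc.1), add_zero]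
            have h3 : FB.flow (IsetW F t b m) (IsetW F t₀ true m) ⟨t, b, rfl⟩
                ⟨t₀, true, rfl⟩ h
                (Sum.inr (⟨(L', w), hL', hw⟩ : AddedV F m)) (Sum.inl w) = 0 :=
              FB.fb2 (IsetW F t b m) (IsetW F t₀ true m) ⟨t, b, rfl⟩
                ⟨t₀, true, rfl⟩ h (⟨(L', w), hL', hw⟩ : AddedV F m) hA hB
            rw [(hIF.1).1 (Sum.inl w)
              (Sum.inr (⟨(L', w), hL', hw⟩ : AddedV F m)), h3, neg_zero]
      · rw [if_neg (fun hc => hv2 hc.2), if_neg (fun hc => hv2 hc.2), add_zero]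
        apply (hIF.1).2
        exact fun hAdj => hv2 hAdj
    have hsum2 : ∑ pr : AddedV F m, (FB.flow (IsetW F t b m) (IsetW F t₀ true m) ⟨t, b, rfl⟩ ⟨t₀, true, rfl⟩ h) (Sum.inl v) (Sum.inr pr) =
        -gfun FB t b v + gfun FB t₀ true v := by
      rw [Finset.sum_congr rfl (fun pr _ => hpoint pr), Finset.sum_add_distrib,
        sum_added_ite, sum_added_ite]
      have e1 : (if v ∈ IsetW F t b m ∧ IsetW F t b m ∈ scriptL F m
          then -gfun FB t b v else 0) = -gfun FB t b v := by
        by_cases hv : v ∈ IsetW F t b m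
        · rw [if_pos ⟨hv, IsetW_mem_scriptL F t b m⟩]
        · rw [if_neg (fun hc => hv hc.1), gfun_zero FB hv, neg_zero]
      have e2 : (if v ∈ IsetW F t₀ true m ∧ IsetW F t₀ true m ∈ scriptL F m
          then gfun FB t₀ true v else 0) = gfun FB t₀ true v := by
        by_cases hv : v ∈ IsetW F t₀ true m
        · rw [if_pos ⟨hv, IsetW_mem_scriptL F t₀ true m⟩]
        · rw [if_neg (fun hc => hv hc.1), gfun_zero FB hv]
      rw [e1, e2]
    rw [hLHS]
    have := hsplit.symm.trans h0
    linarith [hsum2]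

/-- Characterization of coordinatewise gluing partners on the `+` side. -/
theorem glue_all_plus_iff (hGR : GR F) (hflip : ∀ t, IsFlip F t (ηfam t)) (t : T)
    (v c : Word S m) :
    (∀ i, F.glue t (v i) (c i)) ↔ (v ∈ IsetW F t true m ∧ c = etaW ηfam t v) := by
  constructor
  · intro hg
    have hv : v ∈ IsetW F t true m := fun i => ⟨c i, hg i⟩
    refine ⟨hv, funext fun i => ?_⟩
    exact (hGR.1 t (v i)).1 (hg i) ((hflip t).1 (v i) (hv i))
  · rintro ⟨hv, rfl⟩
    exact fun i => (hflip t).1 (v i) (hv i)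

/-- Characterization of coordinatewise gluing partners on the `-` side. -/
theorem glue_all_minus_iff (hGR : GR F) (hflip : ∀ t, IsFlip F t (ηfam t)) (t : T)
    (v c : Word S m) :
    (∀ i, F.glue t (c i) (v i)) ↔ (v ∈ IsetW F t false m ∧ c = etaW ηfam t v) := by
  constructor
  · intro hg
    have hv : v ∈ IsetW F t false m := fun i => ⟨c i, hg i⟩
    refine ⟨hv, funext fun i => ?_⟩
    exact (hGR.1 t (v i)).2 (hg i) ((hflip t).2 (v i) (hv i))
  · rintro ⟨hv, rfl⟩
    exact fun i => (hflip t).2 (v i) (hv i)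

theorem sum_ite_glue_plus (hGR : GR F) (hflip : ∀ t, IsFlip F t (ηfam t)) (t : T)
    (v : Word S m) (f : Word S m → ℝ) :
    ∑ c : Word S m, (if ∀ i, F.glue t (v i) (c i) then f c else 0) =
      if v ∈ IsetW F t true m then f (etaW ηfam t v) else 0 := by
  classical
  have hcong : ∀ c : Word S m, (if ∀ i, F.glue t (v i) (c i) then f c else 0) =
      (if v ∈ IsetW F t true m ∧ c = etaW ηfam t v then f c else 0) := by
    intro c
    rw [if_congr (glue_all_plus_iff hGR hflip t v c) rfl rfl]
  rw [Finset.sum_congr rfl (fun c _ => hcong c)]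
  by_cases hv : v ∈ IsetW F t true m
  · rw [if_pos hv]
    have : ∀ c : Word S m, (if v ∈ IsetW F t true m ∧ c = etaW ηfam t v then f c else 0) =
        (if c = etaW ηfam t v then f c else 0) :=
      fun c => if_congr (by simp [hv]) rfl rfl
    rw [Finset.sum_congr rfl (fun c _ => this c), Finset.sum_ite_eq' Finset.univ _ f]
    simp
  · rw [if_neg hv]
    exact Finset.sum_eq_zero fun c _ => if_neg (fun hc => hv hc.1)

theorem sum_ite_glue_minus (hGR : GR F) (hflip : ∀ t, IsFlip F t (ηfam t)) (t : T)
    (v : Word S m) (f : Word S m → ℝ) :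
    ∑ c : Word S m, (if ∀ i, F.glue t (c i) (v i) then f c else 0) =
      if v ∈ IsetW F t false m then f (etaW ηfam t v) else 0 := by
  classical
  have hcong : ∀ c : Word S m, (if ∀ i, F.glue t (c i) (v i) then f c else 0) =
      (if v ∈ IsetW F t false m ∧ c = etaW ηfam t v then f c else 0) := by
    intro c
    rw [if_congr (glue_all_minus_iff hGR hflip t v c) rfl rfl]
  rw [Finset.sum_congr rfl (fun c _ => hcong c)]
  by_cases hv : v ∈ IsetW F t false m
  · rw [if_pos hv]
    have : ∀ c : Word S m, (if v ∈ IsetW F t false m ∧ c = etaW ηfam t v then f c else 0) =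
        (if c = etaW ηfam t v then f c else 0) :=
      fun c => if_congr (by simp [hv]) rfl rfl
    rw [Finset.sum_congr rfl (fun c _ => this c), Finset.sum_ite_eq' Finset.univ _ f]
    simp
  · rw [if_neg hv]
    exact Finset.sum_eq_zero fun c _ => if_neg (fun hc => hv hc.1)

end Statement17Aux3
section Statement17Aux4

open Classical

variable {S T : Type} [Fintype S] [Nonempty T] {F : System S T} {m : ℕ}
variable {ηfam : T → Iso F F}

theorem rpow_abs_sum_le {q : ℝ} (hq : 1 ≤ q) {ι : Type*} (s : Finset ι) (f : ι → ℝ) :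
    |∑ i ∈ s, f i| ^ q ≤ (s.card : ℝ) ^ q * ∑ i ∈ s, |f i| ^ q := by
  have hq0 : 0 ≤ q := by linarith
  rcases s.eq_empty_or_nonempty with rfl | hs
  · simp [Real.zero_rpow (by linarith : q ≠ 0)]
  · obtain ⟨i₀, hi₀, hmax⟩ := s.exists_max_image (fun i => |f i|) hs
    have h1 : |∑ i ∈ s, f i| ≤ (s.card : ℝ) * |f i₀| := by
      calc |∑ i ∈ s, f i| ≤ ∑ i ∈ s, |f i| := Finset.abs_sum_le_sum_abs _ _
        _ ≤ s.card • |f i₀| := Finset.sum_le_card_nsmul s _ _ (fun i hi => hmax i hi)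
        _ = (s.card : ℝ) * |f i₀| := by simp [nsmul_eq_mul]
    calc |∑ i ∈ s, f i| ^ q ≤ ((s.card : ℝ) * |f i₀|) ^ q :=
        Real.rpow_le_rpow (abs_nonneg _) h1 hq0
      _ = (s.card : ℝ) ^ q * |f i₀| ^ q := Real.mul_rpow (by positivity) (abs_nonneg _)
      _ ≤ (s.card : ℝ) ^ q * ∑ i ∈ s, |f i| ^ q := by
          apply mul_le_mul_of_nonneg_left _ (by positivity)
          exact Finset.single_le_sum (f := fun i => |f i| ^ q) (fun i _ => by positivity) hi₀

theorem rpow_abs_sub_le {q : ℝ} (hq : 1 ≤ q) (x y : ℝ) :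
    |x - y| ^ q ≤ (2 : ℝ) ^ q * (|x| ^ q + |y| ^ q) := by
  have hq0 : 0 ≤ q := by linarith
  have h1 : |x - y| ≤ 2 * max |x| |y| := by
    calc |x - y| ≤ |x| + |y| := abs_sub _ _
      _ ≤ 2 * max |x| |y| := by
          rcases le_total |x| |y| with h | h
          · rw [max_eq_right h]; linarith
          · rw [max_eq_left h]; linarith
  have h2 : max |x| |y| ^ q ≤ |x| ^ q + |y| ^ q := by
    rcases max_cases |x| |y| with ⟨he, _⟩ | ⟨he, _⟩ <;> rw [he]
    · nlinarith [Real.rpow_nonneg (abs_nonneg y) q]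
    · nlinarith [Real.rpow_nonneg (abs_nonneg x) q]
  calc |x - y| ^ q ≤ (2 * max |x| |y|) ^ q :=
      Real.rpow_le_rpow (abs_nonneg _) h1 hq0
    _ = (2 : ℝ) ^ q * max |x| |y| ^ q :=
      Real.mul_rpow (by norm_num) (le_max_of_le_left (abs_nonneg _))
    _ ≤ (2 : ℝ) ^ q * (|x| ^ q + |y| ^ q) := by
        apply mul_le_mul_of_nonneg_left h2 (Real.rpow_nonneg (by norm_num) q)

theorem rpow_abs_sub_le_of_mul_eq_zero {q : ℝ} (hq : 1 ≤ q) {x y : ℝ}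
    (h : x = 0 ∨ y = 0) : |x - y| ^ q ≤ |x| ^ q + |y| ^ q := by
  rcases h with rfl | rfl
  · rw [zero_sub, abs_neg, abs_zero, Real.zero_rpow (by linarith : q ≠ 0)]
    nlinarith [Real.rpow_nonneg (abs_nonneg y) q]
  · rw [sub_zero, abs_zero, Real.zero_rpow (by linarith : q ≠ 0)]
    nlinarith [Real.rpow_nonneg (abs_nonneg x) q]

theorem energy_eq_sum {V : Type} [Fintype V] (q : ℝ) (Φ : V → V → ℝ) :
    energy q Φ = (∑ x : V, ∑ y : V, |Φ x y| ^ q) / 2 := by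
  rw [energy, finsum_eq_sum_of_fintype]
  congr 1
  apply Finset.sum_congr rfl
  intro x _
  rw [finsum_eq_sum_of_fintype]

theorem energy_nonneg {V : Type} [Fintype V] {q : ℝ} (Φ : V → V → ℝ) :
    0 ≤ energy q Φ := by
  rw [energy_eq_sum]
  positivity

/-- The set of basis-flow energies is finite. -/
theorem basisEnergy_spec (FB : FlowBasis F ηfam m) (q : ℝ) :
    ∀ (L₁ L₂ : Set (Word S m)) (h₁ : L₁ ∈ scriptL F m) (h₂ : L₂ ∈ scriptL F m)
      (hne : L₁ ≠ L₂), energy q (FB.flow L₁ L₂ h₁ h₂ hne) ≤ basisEnergy q FB := by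
  intro L₁ L₂ h₁ h₂ hne
  set aux : Set (Word S m) × Set (Word S m) → ℝ := fun P =>
    if h : P.1 ∈ scriptL F m ∧ P.2 ∈ scriptL F m ∧ P.1 ≠ P.2 then
      energy q (FB.flow P.1 P.2 h.1 h.2.1 h.2.2)
    else 0 with haux
  have hsub : {e | ∃ (L₁ L₂ : Set (Word S m)) (h₁ : L₁ ∈ scriptL F m)
      (h₂ : L₂ ∈ scriptL F m) (hne : L₁ ≠ L₂),
      e = energy q (FB.flow L₁ L₂ h₁ h₂ hne)} ⊆ Set.range aux := by
    rintro e ⟨M₁, M₂, g₁, g₂, gne, rfl⟩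
    refine ⟨(M₁, M₂), ?_⟩
    rw [haux]
    simp only
    rw [dif_pos ⟨g₁, g₂, gne⟩]
  have hfin : {e | ∃ (L₁ L₂ : Set (Word S m)) (h₁ : L₁ ∈ scriptL F m)
      (h₂ : L₂ ∈ scriptL F m) (hne : L₁ ≠ L₂),
      e = energy q (FB.flow L₁ L₂ h₁ h₂ hne)}.Finite :=
    (Set.finite_range aux).subset hsub
  exact le_csSup hfin.bddAbove ⟨L₁, L₂, h₁, h₂, hne, rfl⟩

theorem basisEnergy_nonneg (hGR : GR F) (hm : 1 ≤ m) (FB : FlowBasis F ηfam m) (q : ℝ) :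
    0 ≤ basisEnergy q FB := by
  have t₀ : T := Classical.arbitrary T
  refine le_trans (energy_nonneg _) (basisEnergy_spec FB q (IsetW F t₀ true m)
    (IsetW F t₀ (!true) m) ⟨t₀, true, rfl⟩ ⟨t₀, !true, rfl⟩ (IsetW_ne hGR hm t₀ true))

theorem sum_inl_all_le (q : ℝ) (Φ : TildeV F m → TildeV F m → ℝ) :
    ∑ a : Word S m, ∑ y : TildeV F m, |Φ (Sum.inl a) y| ^ q ≤ 2 * energy q Φ := by
  rw [energy_eq_sum]
  rw [mul_div_cancel₀ _ (two_ne_zero)]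
  have hsplit : ∑ x : TildeV F m, ∑ y : TildeV F m, |Φ x y| ^ q =
      (∑ a : Word S m, ∑ y : TildeV F m, |Φ (Sum.inl a) y| ^ q) +
      ∑ pr : AddedV F m, ∑ y : TildeV F m, |Φ (Sum.inr pr) y| ^ q :=
    Fintype.sum_sum_type _
  rw [hsplit]
  have p2 : (0:ℝ) ≤ ∑ pr : AddedV F m, ∑ y : TildeV F m, |Φ (Sum.inr pr) y| ^ q := by
    positivity
  linarith

theorem sum_inl_inl_le (q : ℝ) (Φ : TildeV F m → TildeV F m → ℝ) :
    ∑ a : Word S m, ∑ c : Word S m, |Φ (Sum.inl a) (Sum.inl c)| ^ q ≤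
      2 * energy q Φ := by
  refine le_trans ?_ (sum_inl_all_le q Φ)
  apply Finset.sum_le_sum
  intro a _
  have h2 : ∑ y : TildeV F m, |Φ (Sum.inl a) y| ^ q =
      (∑ c : Word S m, |Φ (Sum.inl a) (Sum.inl c)| ^ q) +
      ∑ pr : AddedV F m, |Φ (Sum.inl a) (Sum.inr pr)| ^ q :=
    Fintype.sum_sum_type _
  rw [h2]
  have p1 : (0:ℝ) ≤ ∑ pr : AddedV F m, |Φ (Sum.inl a) (Sum.inr pr)| ^ q := by positivity
  linarith

theorem Rres_pow_le (hGR : GR F) (hm : 1 ≤ m) (FB : FlowBasis F ηfam m) {q : ℝ}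
    (hq : 1 ≤ q) (t₀ t : T) (b : Bool) :
    ∑ a : Word S m, ∑ c : Word S m, |Rres FB t₀ t b a c| ^ q ≤ 2 * basisEnergy q FB := by
  rw [Rres]
  split
  · next h =>
      refine le_trans (sum_inl_inl_le q _) ?_
      have := basisEnergy_spec FB q (IsetW F t b m) (IsetW F t₀ true m) ⟨t, b, rfl⟩
        ⟨t₀, true, rfl⟩ h
      linarith
  · have hbe := basisEnergy_nonneg hGR hm FB q
    have hz : ∀ a c : Word S m, |(0 : Word S m → Word S m → ℝ) a c| ^ q = 0 := by
      intro a c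
      rw [Pi.zero_apply, Pi.zero_apply, abs_zero, Real.zero_rpow (by linarith : q ≠ 0)]
    calc ∑ a : Word S m, ∑ c : Word S m, |(0 : Word S m → Word S m → ℝ) a c| ^ q
        = ∑ a : Word S m, ∑ c : Word S m, (0:ℝ) :=
          Finset.sum_congr rfl fun a _ => Finset.sum_congr rfl fun c _ => hz a c
      _ ≤ 2 * basisEnergy q FB := by simp; linarith

theorem gfun_pow_le (hGR : GR F) (hm : 1 ≤ m) (FB : FlowBasis F ηfam m) {q : ℝ}
    (hq : 1 ≤ q) (t : T) (b : Bool) :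
    ∑ v : Word S m, |gfun FB t b v| ^ q ≤ 2 * basisEnergy q FB := by
  have hne := IsetW_ne hGR hm t b
  have hIF := FB.flow_isFlow (IsetW F t b m) (IsetW F t (!b) m) ⟨t, b, rfl⟩
    ⟨t, !b, rfl⟩ hne
  have hpoint : ∀ v : Word S m, |gfun FB t b v| ^ q ≤
      ∑ y : TildeV F m, |FB.flow (IsetW F t b m) (IsetW F t (!b) m) ⟨t, b, rfl⟩
        ⟨t, !b, rfl⟩ hne (Sum.inl v) y| ^ q := by
    intro v
    by_cases hv : v ∈ IsetW F t b m
    · have h1 : FB.flow (IsetW F t b m) (IsetW F t (!b) m) ⟨t, b, rfl⟩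
          ⟨t, !b, rfl⟩ hne (Sum.inl v) (Sum.inr (mkAdded F t b v hv)) = - gfun FB t b v := by
        rw [(hIF.1).1 (Sum.inl v) (Sum.inr (mkAdded F t b v hv))]
        rw [gout_eq hGR hm FB ⟨t, b, rfl⟩ ⟨t, !b, rfl⟩ hne v hv]
      calc |gfun FB t b v| ^ q
          = |FB.flow (IsetW F t b m) (IsetW F t (!b) m) ⟨t, b, rfl⟩
              ⟨t, !b, rfl⟩ hne (Sum.inl v) (Sum.inr (mkAdded F t b v hv))| ^ q := by
            rw [h1, abs_neg]
        _ ≤ _ := Finset.single_le_sum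
            (f := fun y : TildeV F m => |FB.flow (IsetW F t b m) (IsetW F t (!b) m)
              ⟨t, b, rfl⟩ ⟨t, !b, rfl⟩ hne (Sum.inl v) y| ^ q)
            (fun y _ => by positivity)
            (Finset.mem_univ (Sum.inr (mkAdded F t b v hv)))
    · rw [gfun_zero FB hv, abs_zero, Real.zero_rpow (by linarith : q ≠ 0)]
      positivity
  calc ∑ v : Word S m, |gfun FB t b v| ^ q
      ≤ ∑ v : Word S m, ∑ y : TildeV F m, |FB.flow (IsetW F t b m) (IsetW F t (!b) m)
          ⟨t, b, rfl⟩ ⟨t, !b, rfl⟩ hne (Sum.inl v) y| ^ q :=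
        Finset.sum_le_sum (fun v _ => hpoint v)
    _ ≤ 2 * energy q (FB.flow (IsetW F t b m) (IsetW F t (!b) m)
          ⟨t, b, rfl⟩ ⟨t, !b, rfl⟩ hne) :=
        sum_inl_all_le q _
    _ ≤ 2 * basisEnergy q FB := by
        have := basisEnergy_spec FB q (IsetW F t b m) (IsetW F t (!b) m)
          ⟨t, b, rfl⟩ ⟨t, !b, rfl⟩ hne
        linarith

end Statement17Aux4
section Statement17Aux5

open Classical

variable {S T : Type} [Fintype S] [Nonempty T] {F : System S T} {m : ℕ}
variable {ηfam : T → Iso F F}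

def wLeft {n m : ℕ} (x : Word S (n + m)) : Word S n := fun i => x (Fin.castAdd m i)

def wRight {n m : ℕ} (x : Word S (n + m)) : Word S m := fun j => x (Fin.natAdd n j)

theorem wLeft_append {n : ℕ} (u : Word S n) (a : Word S m) :
    wLeft (Fin.append u a) = u := funext fun i => Fin.append_left u a i

theorem wRight_append {n : ℕ} (u : Word S n) (a : Word S m) :
    wRight (Fin.append u a) = a := funext fun j => Fin.append_right u a j

theorem append_wLR {n : ℕ} (x : Word S (n + m)) :
    Fin.append (wLeft x) (wRight x) = x := append_left_right x

theorem append_bijective {n : ℕ} :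
    Function.Bijective (fun p : Word S n × Word S m => Fin.append p.1 p.2) := by
  constructor
  · intro p q h
    exact Prod.ext (append_inj_left h) (append_inj_right h)
  · intro x
    exact ⟨(wLeft x, wRight x), append_wLR x⟩

/-- The port flow used inside the copy `u`, for the edge `{u, u'}`. -/
noncomputable def RPort (FB : FlowBasis F ηfam m) (t₀ : T) {n : ℕ} (u u' : Word S n) :
    Word S m → Word S m → ℝ :=
  if edge F n u u' then Rres FB t₀ (etyp F n u u') true
  else if edge F n u' u then Rres FB t₀ (etyp F n u' u) false
  else 0

/-- The boundary-port distribution of the copy `u` towards the copy `u'`. -/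
noncomputable def gport (FB : FlowBasis F ηfam m) (t₀ : T) {n : ℕ} (u u' : Word S n)
    (v : Word S m) : ℝ :=
  if edge F n u u' then gfun FB (etyp F n u u') true v
  else if edge F n u' u then gfun FB (etyp F n u' u) false v
  else gfun FB t₀ true v

/-- The in-copy part of the replacement flow. -/
noncomputable def PhiIn (FB : FlowBasis F ηfam m) (t₀ : T) {n : ℕ}
    (tA : Word S n → T) (oA : Word S n → Bool) (Fn : Word S n → Word S n → ℝ)
    (u : Word S n) (a c : Word S m) : ℝ :=
  fdiv Fn u * Rres FB t₀ (tA u) (oA u) a c -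
    ∑ u' : Word S n, Fn u u' * RPort FB t₀ u u' a c

/-- The cross-copy part of the replacement flow. -/
noncomputable def crossF (FB : FlowBasis F ηfam m) {n : ℕ}
    (Fn : Word S n → Word S n → ℝ) (x y : Word S (n + m)) : ℝ :=
  if edge F n (wLeft x) (wLeft y) ∧
      (∀ i, F.glue (etyp F n (wLeft x) (wLeft y)) (wRight x i) (wRight y i)) then
    Fn (wLeft x) (wLeft y) * gfun FB (etyp F n (wLeft x) (wLeft y)) true (wRight x)
  else 0

/-- The replacement flow `F_{n+m}`. -/
noncomputable def FnmF (FB : FlowBasis F ηfam m) (t₀ : T) {n : ℕ}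
    (tA : Word S n → T) (oA : Word S n → Bool) (Fn : Word S n → Word S n → ℝ)
    (x y : Word S (n + m)) : ℝ :=
  if wLeft x = wLeft y then PhiIn FB t₀ tA oA Fn (wLeft x) (wRight x) (wRight y)
  else crossF FB Fn x y - crossF FB Fn y x

theorem RPort_antisym (FB : FlowBasis F ηfam m) (t₀ : T) {n : ℕ} (u u' : Word S n)
    (a c : Word S m) : RPort FB t₀ u u' a c = - RPort FB t₀ u u' c a := by
  unfold RPort
  split
  · exact Rres_antisym FB t₀ _ true a c
  · split
    · exact Rres_antisym FB t₀ _ false a c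
    · simp

theorem RPort_support (FB : FlowBasis F ηfam m) (t₀ : T) {n : ℕ} (u u' : Word S n)
    {a c : Word S m} (h : ¬ (replGraph F m).Adj a c) : RPort FB t₀ u u' a c = 0 := by
  rw [RPort]
  split
  · exact Rres_support FB t₀ _ true h
  · split
    · exact Rres_support FB t₀ _ false h
    · simp

theorem sum_RPort (hGR : GR F) (hm : 1 ≤ m) (FB : FlowBasis F ηfam m) (t₀ : T) {n : ℕ}
    (u u' : Word S n) (v : Word S m) :
    ∑ c : Word S m, RPort FB t₀ u u' v c =
      gport FB t₀ u u' v - gfun FB t₀ true v := by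
  rw [RPort, gport]
  split
  · exact Rres_div hGR hm FB t₀ _ true v
  · split
    · exact Rres_div hGR hm FB t₀ _ false v
    · simp

theorem PhiIn_antisym (FB : FlowBasis F ηfam m) (t₀ : T) {n : ℕ}
    (tA : Word S n → T) (oA : Word S n → Bool) (Fn : Word S n → Word S n → ℝ)
    (u : Word S n) (a c : Word S m) :
    PhiIn FB t₀ tA oA Fn u a c = - PhiIn FB t₀ tA oA Fn u c a := by
  rw [PhiIn, PhiIn, Rres_antisym FB t₀ (tA u) (oA u) a c]
  rw [Finset.sum_congr rfl (fun u' _ => by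
    rw [RPort_antisym FB t₀ u u' a c] :
    ∀ u' ∈ Finset.univ, Fn u u' * RPort FB t₀ u u' a c
      = Fn u u' * - RPort FB t₀ u u' c a)]
  rw [Finset.sum_congr rfl (fun u' _ => mul_neg (Fn u u') (RPort FB t₀ u u' c a)),
    Finset.sum_neg_distrib]
  ring

theorem PhiIn_support (FB : FlowBasis F ηfam m) (t₀ : T) {n : ℕ}
    (tA : Word S n → T) (oA : Word S n → Bool) (Fn : Word S n → Word S n → ℝ)
    (u : Word S n) {a c : Word S m} (h : ¬ (replGraph F m).Adj a c) :
    PhiIn FB t₀ tA oA Fn u a c = 0 := by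
  rw [PhiIn, Rres_support FB t₀ _ _ h]
  rw [Finset.sum_congr rfl (fun u' _ => by
    rw [RPort_support FB t₀ u u' h, mul_zero] :
    ∀ u' ∈ Finset.univ, Fn u u' * RPort FB t₀ u u' a c = 0)]
  simp

theorem sum_PhiIn (hGR : GR F) (hm : 1 ≤ m) (FB : FlowBasis F ηfam m) (t₀ : T) {n : ℕ}
    (tA : Word S n → T) (oA : Word S n → Bool) (Fn : Word S n → Word S n → ℝ)
    (u : Word S n) (v : Word S m) :
    ∑ c : Word S m, PhiIn FB t₀ tA oA Fn u v c =
      fdiv Fn u * (gfun FB (tA u) (oA u) v - gfun FB t₀ true v) -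
        ∑ u' : Word S n, Fn u u' * (gport FB t₀ u u' v - gfun FB t₀ true v) := by
  rw [show (∑ c : Word S m, PhiIn FB t₀ tA oA Fn u v c) =
      (∑ c : Word S m, fdiv Fn u * Rres FB t₀ (tA u) (oA u) v c) -
      ∑ c : Word S m, ∑ u' : Word S n, Fn u u' * RPort FB t₀ u u' v c from
    by rw [← Finset.sum_sub_distrib]; rfl]
  rw [← Finset.mul_sum, Rres_div hGR hm FB t₀ (tA u) (oA u) v]
  rw [Finset.sum_comm]
  congr 1
  apply Finset.sum_congr rfl
  intro u' _
  rw [← Finset.mul_sum, sum_RPort hGR hm FB t₀ u u' v]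

theorem crossF_app (FB : FlowBasis F ηfam m) {n : ℕ} (Fn : Word S n → Word S n → ℝ)
    (u u' : Word S n) (a c : Word S m) :
    crossF FB Fn (Fin.append u a) (Fin.append u' c) =
      if edge F n u u' ∧ (∀ i, F.glue (etyp F n u u') (a i) (c i)) then
        Fn u u' * gfun FB (etyp F n u u') true a
      else 0 := by
  rw [crossF]
  simp only [wLeft_append, wRight_append]

theorem sum_cross (hGR : GR F) (hm : 1 ≤ m) (hflip : ∀ t, IsFlip F t (ηfam t))
    (FB : FlowBasis F ηfam m) (t₀ : T) {n : ℕ} (Fn : Word S n → Word S n → ℝ)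
    (hAS : Antisym (replGraph F n) Fn) {u u' : Word S n} (hne : u ≠ u') (v : Word S m) :
    ∑ c : Word S m, (crossF FB Fn (Fin.append u v) (Fin.append u' c) -
        crossF FB Fn (Fin.append u' c) (Fin.append u v)) =
      Fn u u' * gport FB t₀ u u' v := by
  rw [Finset.sum_sub_distrib]
  rw [Finset.sum_congr rfl (fun c _ => crossF_app FB Fn u u' v c),
    Finset.sum_congr rfl (fun c _ => crossF_app FB Fn u' u c v)]
  by_cases he : edge F n u u'
  · have hne2 : ¬ edge F n u' u := edge_asymm F n u u' he
    rw [gport, if_pos he]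
    have h1 : ∑ c : Word S m, (if edge F n u u' ∧ (∀ i, F.glue (etyp F n u u') (v i) (c i))
        then Fn u u' * gfun FB (etyp F n u u') true v else 0) =
        Fn u u' * gfun FB (etyp F n u u') true v := by
      rw [Finset.sum_congr rfl (fun c _ => if_congr (and_iff_right he) rfl rfl)]
      rw [sum_ite_glue_plus hGR hflip (etyp F n u u') v
        (fun _ => Fn u u' * gfun FB (etyp F n u u') true v)]
      by_cases hv : v ∈ IsetW F (etyp F n u u') true m
      · rw [if_pos hv]
      · rw [if_neg hv, gfun_zero FB hv, mul_zero]
    have h2 : ∑ c : Word S m, (if edge F n u' u ∧ (∀ i, F.glue (etyp F n u' u) (c i) (v i))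
        then Fn u' u * gfun FB (etyp F n u' u) true c else 0) = 0 :=
      Finset.sum_eq_zero fun c _ => if_neg (fun hc => hne2 hc.1)
    rw [h1, h2, sub_zero]
  · by_cases he' : edge F n u' u
    · rw [gport, if_neg he, if_pos he']
      have h1 : ∑ c : Word S m, (if edge F n u u' ∧
          (∀ i, F.glue (etyp F n u u') (v i) (c i))
          then Fn u u' * gfun FB (etyp F n u u') true v else 0) = 0 :=
        Finset.sum_eq_zero fun c _ => if_neg (fun hc => he hc.1)
      have h2 : ∑ c : Word S m, (if edge F n u' u ∧
          (∀ i, F.glue (etyp F n u' u) (c i) (v i))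
          then Fn u' u * gfun FB (etyp F n u' u) true c else 0) =
          Fn u' u * gfun FB (etyp F n u' u) false v := by
        rw [Finset.sum_congr rfl (fun c _ => if_congr (and_iff_right he') rfl rfl)]
        rw [sum_ite_glue_minus hGR hflip (etyp F n u' u) v
          (fun c => Fn u' u * gfun FB (etyp F n u' u) true c)]
        by_cases hv : v ∈ IsetW F (etyp F n u' u) false m
        · rw [if_pos hv]
          have hfl := gfun_flip hGR hm hflip FB hv
          simp only [Bool.not_false] at hfl
          rw [← hfl]
        · rw [if_neg hv, gfun_zero FB hv, mul_zero]
      rw [h1, h2, zero_sub]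
      have hFnanti : Fn u u' = - Fn u' u := hAS.1 u u'
      rw [hFnanti]
      ring
    · have hFn0 : Fn u u' = 0 := by
        apply hAS.2
        intro hAdj
        rcases hAdj.2 with h | h
        · exact he h
        · exact he' h
      have h1 : ∑ c : Word S m, (if edge F n u u' ∧
          (∀ i, F.glue (etyp F n u u') (v i) (c i))
          then Fn u u' * gfun FB (etyp F n u u') true v else 0) = 0 :=
        Finset.sum_eq_zero fun c _ => if_neg (fun hc => he hc.1)
      have h2 : ∑ c : Word S m, (if edge F n u' u ∧
          (∀ i, F.glue (etyp F n u' u) (c i) (v i))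
          then Fn u' u * gfun FB (etyp F n u' u) true c else 0) = 0 :=
        Finset.sum_eq_zero fun c _ => if_neg (fun hc => he' hc.1)
      rw [h1, h2, hFn0, zero_mul, sub_zero]

theorem fdiv_FnmF (hGR : GR F) {n : ℕ} (hn : 1 ≤ n) (hm : 1 ≤ m)
    (hflip : ∀ t, IsFlip F t (ηfam t)) (FB : FlowBasis F ηfam m) (t₀ : T)
    (tA : Word S n → T) (oA : Word S n → Bool) (Fn : Word S n → Word S n → ℝ)
    (hAS : Antisym (replGraph F n) Fn) (u : Word S n) (v : Word S m) :
    fdiv (FnmF FB t₀ tA oA Fn) (Fin.append u v) =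
      fdiv Fn u * gfun FB (tA u) (oA u) v := by
  have hreindex : fdiv (FnmF FB t₀ tA oA Fn) (Fin.append u v) =
      ∑ u' : Word S n, ∑ c : Word S m,
        FnmF FB t₀ tA oA Fn (Fin.append u v) (Fin.append u' c) := by
    rw [fdiv, finsum_eq_sum_of_fintype]
    rw [← Fintype.sum_bijective _ append_bijective
      (fun p : Word S n × Word S m =>
        FnmF FB t₀ tA oA Fn (Fin.append u v) (Fin.append p.1 p.2))
      (fun y => FnmF FB t₀ tA oA Fn (Fin.append u v) y) (fun p => rfl)]
    rw [Fintype.sum_prod_type]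
  rw [hreindex]
  have hWdiag : ∑ c : Word S m, FnmF FB t₀ tA oA Fn (Fin.append u v) (Fin.append u c) =
      fdiv Fn u * (gfun FB (tA u) (oA u) v - gfun FB t₀ true v) -
        ∑ u' : Word S n, Fn u u' * (gport FB t₀ u u' v - gfun FB t₀ true v) := by
    have : ∀ c : Word S m, FnmF FB t₀ tA oA Fn (Fin.append u v) (Fin.append u c) =
        PhiIn FB t₀ tA oA Fn u v c := by
      intro c
      simp only [FnmF, wLeft_append, wRight_append]
      simp
    rw [Finset.sum_congr rfl (fun c _ => this c)]
    exact sum_PhiIn hGR hm FB t₀ tA oA Fn u v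
  have hWoff : ∀ u' : Word S n, u' ≠ u →
      ∑ c : Word S m, FnmF FB t₀ tA oA Fn (Fin.append u v) (Fin.append u' c) =
        Fn u u' * gport FB t₀ u u' v := by
    intro u' hne
    have : ∀ c : Word S m, FnmF FB t₀ tA oA Fn (Fin.append u v) (Fin.append u' c) =
        crossF FB Fn (Fin.append u v) (Fin.append u' c) -
          crossF FB Fn (Fin.append u' c) (Fin.append u v) := by
      intro c
      simp only [FnmF, wLeft_append, wRight_append]
      rw [if_neg (fun h => hne h.symm)]
    rw [Finset.sum_congr rfl (fun c _ => this c)]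
    exact sum_cross hGR hm hflip FB t₀ Fn hAS (fun h => hne h.symm) v
  rw [← Finset.add_sum_erase Finset.univ _ (Finset.mem_univ u)]
  rw [Finset.sum_congr rfl
    (fun u' hu' => hWoff u' (Finset.ne_of_mem_erase hu'))]
  rw [hWdiag, Finset.sum_erase_eq_sub (Finset.mem_univ u)]
  have hFnuu : Fn u u = 0 := by
    have := hAS.1 u u
    linarith
  have hsum_fdiv : ∑ u' : Word S n, Fn u u' = fdiv Fn u := by
    rw [fdiv, finsum_eq_sum_of_fintype]
  have hexp : ∑ u' : Word S n, Fn u u' * (gport FB t₀ u u' v - gfun FB t₀ true v) =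
      (∑ u' : Word S n, Fn u u' * gport FB t₀ u u' v) -
        (∑ u' : Word S n, Fn u u') * gfun FB t₀ true v := by
    rw [Finset.sum_mul, ← Finset.sum_sub_distrib]
    apply Finset.sum_congr rfl
    intro u' _
    ring
  rw [hexp, hFnuu, zero_mul, hsum_fdiv]
  ring

end Statement17Aux5
section Statement17Aux6

open Classical

variable {S T : Type} [Fintype S] [Nonempty T] {F : System S T} {m : ℕ}
variable {ηfam : T → Iso F F}

theorem FnmF_antisym (FB : FlowBasis F ηfam m) (t₀ : T) {n : ℕ}
    (tA : Word S n → T) (oA : Word S n → Bool) (Fn : Word S n → Word S n → ℝ)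
    (x y : Word S (n + m)) :
    FnmF FB t₀ tA oA Fn x y = - FnmF FB t₀ tA oA Fn y x := by
  by_cases h : wLeft x = wLeft y
  · simp only [FnmF, if_pos h, if_pos h.symm]
    rw [h]
    exact PhiIn_antisym FB t₀ tA oA Fn (wLeft y) (wRight x) (wRight y)
  · simp only [FnmF, if_neg h, if_neg (fun hh => h (Eq.symm hh))]
    ring

theorem FnmF_support (hGR : GR F) {n : ℕ} (hn : 1 ≤ n) (hm : 1 ≤ m)
    (FB : FlowBasis F ηfam m) (t₀ : T) (tA : Word S n → T) (oA : Word S n → Bool)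
    (Fn : Word S n → Word S n → ℝ) (x y : Word S (n + m))
    (h : ¬ (replGraph F (n + m)).Adj x y) : FnmF FB t₀ tA oA Fn x y = 0 := by
  rcases eq_or_ne x y with rfl | hxy
  · have := FnmF_antisym FB t₀ tA oA Fn x x
    linarith
  · have hnadj : ¬ adjW F (n + m) x y := fun ha => h ⟨hxy, ha⟩
    by_cases hL : wLeft x = wLeft y
    · simp only [FnmF, if_pos hL]
      apply PhiIn_support
      intro hAdj
      apply hnadj
      rcases hAdj.2 with he | he
      · left
        have key : edge F (n + m) (Fin.append (wLeft x) (wRight x))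
            (Fin.append (wLeft x) (wRight y)) :=
          ((edge_append_same (F := F) hn m hm (wLeft x) (wRight x) (wRight y)).1).2 he
        rw [append_wLR x] at key
        rw [hL, append_wLR y] at key
        exact key
      · right
        have key : edge F (n + m) (Fin.append (wLeft x) (wRight y))
            (Fin.append (wLeft x) (wRight x)) :=
          ((edge_append_same (F := F) hn m hm (wLeft x) (wRight y) (wRight x)).1).2 he
        rw [append_wLR x] at key
        rw [hL, append_wLR y] at key
        exact key
    · simp only [FnmF, if_neg hL]
      have c1 : crossF FB Fn x y = 0 := by
        rw [crossF, if_neg]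
        rintro ⟨he, hg⟩
        apply hnadj
        left
        have key : edge F (n + m) (Fin.append (wLeft x) (wRight x))
            (Fin.append (wLeft y) (wRight y)) :=
          ((edge_append_ne (F := F) hn m (wLeft x) (wLeft y) hL (wRight x) (wRight y)).1).2
            ⟨he, hg⟩
        rw [append_wLR x, append_wLR y] at key
        exact key
      have c2 : crossF FB Fn y x = 0 := by
        rw [crossF, if_neg]
        rintro ⟨he, hg⟩
        apply hnadj
        right
        have key : edge F (n + m) (Fin.append (wLeft y) (wRight y))
            (Fin.append (wLeft x) (wRight x)) :=
          ((edge_append_ne (F := F) hn m (wLeft y) (wLeft x)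
            (fun hh => hL (Eq.symm hh)) (wRight y) (wRight x)).1).2 ⟨he, hg⟩
        rw [append_wLR x, append_wLR y] at key
        exact key
      rw [c1, c2, sub_zero]

theorem RPort_pow_le (hGR : GR F) (hm : 1 ≤ m) (FB : FlowBasis F ηfam m) {q : ℝ}
    (hq : 1 ≤ q) (t₀ : T) {n : ℕ} (u u' : Word S n) :
    ∑ a : Word S m, ∑ c : Word S m, |RPort FB t₀ u u' a c| ^ q ≤
      2 * basisEnergy q FB := by
  have hbe := basisEnergy_nonneg hGR hm FB q
  unfold RPort
  split
  · exact Rres_pow_le hGR hm FB hq t₀ _ true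
  · split
    · exact Rres_pow_le hGR hm FB hq t₀ _ false
    · have : ∀ a c : Word S m, |(0 : Word S m → Word S m → ℝ) a c| ^ q = 0 := by
        intro a c
        rw [Pi.zero_apply, Pi.zero_apply, abs_zero, Real.zero_rpow (by linarith : q ≠ 0)]
      calc ∑ a : Word S m, ∑ c : Word S m, |(0 : Word S m → Word S m → ℝ) a c| ^ q
          = ∑ a : Word S m, ∑ c : Word S m, (0:ℝ) :=
            Finset.sum_congr rfl fun a _ => Finset.sum_congr rfl fun c _ => this a c
        _ ≤ 2 * basisEnergy q FB := by simp; linarith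

theorem mul_sum2 {ι κ : Type*} [Fintype ι] [Fintype κ] (C : ℝ) (f : ι → κ → ℝ) :
    ∑ a : ι, ∑ c : κ, C * f a c = C * ∑ a : ι, ∑ c : κ, f a c := by
  rw [Finset.mul_sum]
  exact Finset.sum_congr rfl fun a _ => (Finset.mul_sum _ _ _).symm

theorem sum_swap3 {ι κ ν : Type*} [Fintype ι] [Fintype κ] [Fintype ν]
    (f : ν → ι → κ → ℝ) :
    ∑ a : ι, ∑ c : κ, ∑ x : ν, f x a c = ∑ x : ν, ∑ a : ι, ∑ c : κ, f x a c := by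
  calc ∑ a : ι, ∑ c : κ, ∑ x : ν, f x a c
      = ∑ a : ι, ∑ x : ν, ∑ c : κ, f x a c :=
        Finset.sum_congr rfl fun a _ => Finset.sum_comm
    _ = ∑ x : ν, ∑ a : ι, ∑ c : κ, f x a c := Finset.sum_comm

theorem energy_FnmF_le (hGR : GR F) {n : ℕ} (hn : 1 ≤ n) (hm : 1 ≤ m)
    (hflip : ∀ t, IsFlip F t (ηfam t)) (FB : FlowBasis F ηfam m) (t₀ : T)
    (tA : Word S n → T) (oA : Word S n → Bool) (Fn : Word S n → Word S n → ℝ)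
    (hAS : Antisym (replGraph F n) Fn) {q : ℝ} (hq : 1 ≤ q) (Cdeg : ℕ)
    (hdeg : ∀ (l : ℕ) (w : Word S l), degGm F l w ≤ Cdeg) :
    energy q (FnmF FB t₀ tA oA Fn) ≤
      ((2:ℝ) ^ (q + 3) * ((Cdeg:ℝ) + 1) ^ q + 8) * basisEnergy q FB * energy q Fn := by
  have hq0 : 0 ≤ q := by linarith
  have hbe := basisEnergy_nonneg hGR hm FB q
  have hef : 0 ≤ energy q Fn := energy_nonneg Fn
  set bE := basisEnergy q FB with hbEdef
  set eF := energy q Fn with heFdef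
  -- the neighbour finsets
  set Nu : Word S n → Finset (Word S n) :=
    fun u => Finset.univ.filter (fun y => (replGraph F n).Adj u y) with hNu
  have hcard : ∀ u : Word S n, ((Nu u).card : ℝ) ≤ (Cdeg : ℝ) := by
    intro u
    have h1 : ((Nu u : Set (Word S n))).ncard ≤ degGm F n u := by
      apply Set.ncard_le_ncard _ (Set.toFinite _)
      intro y hy
      simp only [hNu, Finset.coe_filter, Set.mem_setOf_eq] at hy
      exact hy.2.2
    rw [Set.ncard_coe_finset] at h1
    have := hdeg n u
    exact_mod_cast le_trans h1 this
  have hFn0 : ∀ u y, y ∉ Nu u → Fn u y = 0 := by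
    intro u y hy
    exact hAS.2 u y (by simpa [hNu] using hy)
  -- |fdiv| bound
  have hfdiv : ∀ u : Word S n, |fdiv Fn u| ^ q ≤
      ((Cdeg:ℝ)) ^ q * ∑ y : Word S n, |Fn u y| ^ q := by
    intro u
    have h0 : fdiv Fn u = ∑ y ∈ Nu u, Fn u y := by
      rw [fdiv, finsum_eq_sum_of_fintype]
      symm
      apply Finset.sum_subset (Finset.filter_subset _ _)
      intro y _ hy
      exact hFn0 u y hy
    rw [h0]
    refine le_trans (rpow_abs_sum_le hq _ _) ?_
    apply mul_le_mul
    · exact Real.rpow_le_rpow (by positivity) (hcard u) hq0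
    · exact Finset.sum_le_sum_of_subset_of_nonneg (Finset.filter_subset _ _)
        (fun y _ _ => by positivity)
    · positivity
    · positivity
  -- diagonal bound
  have hdiag : ∀ u : Word S n,
      ∑ a : Word S m, ∑ c : Word S m, |PhiIn FB t₀ tA oA Fn u a c| ^ q ≤
        (2:ℝ) ^ q * (4 * bE) * ((Cdeg:ℝ) ^ q * ∑ y : Word S n, |Fn u y| ^ q) := by
    intro u
    have hstep1 : ∀ a c : Word S m, |PhiIn FB t₀ tA oA Fn u a c| ^ q ≤
        (2:ℝ) ^ q * (|fdiv Fn u * Rres FB t₀ (tA u) (oA u) a c| ^ q +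
          |∑ u' : Word S n, Fn u u' * RPort FB t₀ u u' a c| ^ q) :=
      fun a c => rpow_abs_sub_le hq _ _
    have hX : ∑ a : Word S m, ∑ c : Word S m,
        |fdiv Fn u * Rres FB t₀ (tA u) (oA u) a c| ^ q ≤
        ((Cdeg:ℝ) ^ q * ∑ y : Word S n, |Fn u y| ^ q) * (2 * bE) := by
      have e1 : ∀ a c : Word S m, |fdiv Fn u * Rres FB t₀ (tA u) (oA u) a c| ^ q =
          |fdiv Fn u| ^ q * |Rres FB t₀ (tA u) (oA u) a c| ^ q := by
        intro a c
        rw [abs_mul, Real.mul_rpow (abs_nonneg _) (abs_nonneg _)]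
      calc ∑ a : Word S m, ∑ c : Word S m, |fdiv Fn u * Rres FB t₀ (tA u) (oA u) a c| ^ q
          = |fdiv Fn u| ^ q * ∑ a : Word S m, ∑ c : Word S m,
              |Rres FB t₀ (tA u) (oA u) a c| ^ q := by
            rw [Finset.mul_sum]
            apply Finset.sum_congr rfl
            intro a _
            rw [Finset.mul_sum]
            exact Finset.sum_congr rfl fun c _ => e1 a c
        _ ≤ ((Cdeg:ℝ) ^ q * ∑ y : Word S n, |Fn u y| ^ q) * (2 * bE) := by
            apply mul_le_mul (hfdiv u) (Rres_pow_le hGR hm FB hq t₀ _ _)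
              (by positivity) (by positivity)
    have hY : ∑ a : Word S m, ∑ c : Word S m,
        |∑ u' : Word S n, Fn u u' * RPort FB t₀ u u' a c| ^ q ≤
        ((Cdeg:ℝ) ^ q * ∑ y : Word S n, |Fn u y| ^ q) * (2 * bE) := by
      have hpt : ∀ a c : Word S m,
          |∑ u' : Word S n, Fn u u' * RPort FB t₀ u u' a c| ^ q ≤
          (Cdeg:ℝ) ^ q * ∑ u' : Word S n, |Fn u u'| ^ q * |RPort FB t₀ u u' a c| ^ q := by
        intro a c
        have h0 : ∑ u' : Word S n, Fn u u' * RPort FB t₀ u u' a c =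
            ∑ u' ∈ Nu u, Fn u u' * RPort FB t₀ u u' a c := by
          symm
          apply Finset.sum_subset (Finset.filter_subset _ _)
          intro y _ hy
          rw [hFn0 u y hy, zero_mul]
        rw [h0]
        refine le_trans (rpow_abs_sum_le hq _ _) ?_
        apply mul_le_mul
        · exact Real.rpow_le_rpow (by positivity) (hcard u) hq0
        · refine le_trans (Finset.sum_le_sum_of_subset_of_nonneg
            (Finset.filter_subset _ _) (fun y _ _ => by positivity)) ?_
          apply le_of_eq
          apply Finset.sum_congr rfl
          intro u' _
          rw [abs_mul, Real.mul_rpow (abs_nonneg _) (abs_nonneg _)]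
        · positivity
        · positivity
      calc ∑ a : Word S m, ∑ c : Word S m,
            |∑ u' : Word S n, Fn u u' * RPort FB t₀ u u' a c| ^ q
          ≤ ∑ a : Word S m, ∑ c : Word S m, (Cdeg:ℝ) ^ q *
              ∑ u' : Word S n, |Fn u u'| ^ q * |RPort FB t₀ u u' a c| ^ q :=
            Finset.sum_le_sum fun a _ => Finset.sum_le_sum fun c _ => hpt a c
        _ = (Cdeg:ℝ) ^ q * ∑ u' : Word S n, |Fn u u'| ^ q *
              (∑ a : Word S m, ∑ c : Word S m, |RPort FB t₀ u u' a c| ^ q) := by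
            rw [mul_sum2 ((Cdeg:ℝ) ^ q)
              (fun (a : Word S m) (c : Word S m) =>
                ∑ u' : Word S n, |Fn u u'| ^ q * |RPort FB t₀ u u' a c| ^ q)]
            congr 1
            rw [sum_swap3 (fun (u' : Word S n) (a : Word S m) (c : Word S m) =>
              |Fn u u'| ^ q * |RPort FB t₀ u u' a c| ^ q)]
            exact Finset.sum_congr rfl fun u' _ =>
              (mul_sum2 (|Fn u u'| ^ q) (fun a c => |RPort FB t₀ u u' a c| ^ q))
        _ ≤ (Cdeg:ℝ) ^ q * ∑ u' : Word S n, |Fn u u'| ^ q * (2 * bE) := by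
            apply mul_le_mul_of_nonneg_left _ (by positivity)
            apply Finset.sum_le_sum
            intro u' _
            exact mul_le_mul_of_nonneg_left (RPort_pow_le hGR hm FB hq t₀ u u')
              (by positivity)
        _ = ((Cdeg:ℝ) ^ q * ∑ u' : Word S n, |Fn u u'| ^ q) * (2 * bE) := by
            rw [← Finset.sum_mul, mul_assoc]
    calc ∑ a : Word S m, ∑ c : Word S m, |PhiIn FB t₀ tA oA Fn u a c| ^ q
        ≤ ∑ a : Word S m, ∑ c : Word S m, (2:ℝ) ^ q *
            (|fdiv Fn u * Rres FB t₀ (tA u) (oA u) a c| ^ q +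
              |∑ u' : Word S n, Fn u u' * RPort FB t₀ u u' a c| ^ q) :=
          Finset.sum_le_sum fun a _ => Finset.sum_le_sum fun c _ => hstep1 a c
      _ = (2:ℝ) ^ q * ∑ a : Word S m, ∑ c : Word S m,
            (|fdiv Fn u * Rres FB t₀ (tA u) (oA u) a c| ^ q +
              |∑ u' : Word S n, Fn u u' * RPort FB t₀ u u' a c| ^ q) :=
          mul_sum2 _ _
      _ = (2:ℝ) ^ q * ((∑ a : Word S m, ∑ c : Word S m,
            |fdiv Fn u * Rres FB t₀ (tA u) (oA u) a c| ^ q) +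
            ∑ a : Word S m, ∑ c : Word S m,
              |∑ u' : Word S n, Fn u u' * RPort FB t₀ u u' a c| ^ q) := by
          congr 1
          rw [← Finset.sum_add_distrib]
          exact Finset.sum_congr rfl fun a _ => Finset.sum_add_distrib
      _ ≤ (2:ℝ) ^ q * (((Cdeg:ℝ) ^ q * ∑ y : Word S n, |Fn u y| ^ q) * (2 * bE) +
            ((Cdeg:ℝ) ^ q * ∑ y : Word S n, |Fn u y| ^ q) * (2 * bE)) := by
          apply mul_le_mul_of_nonneg_left _ (by positivity)
          exact add_le_add hX hY
      _ = (2:ℝ) ^ q * (4 * bE) * ((Cdeg:ℝ) ^ q * ∑ y : Word S n, |Fn u y| ^ q) := by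
          ring
  -- cross-term bound
  have hcross1 : ∀ u u' : Word S n,
      ∑ a : Word S m, ∑ c : Word S m,
        |crossF FB Fn (Fin.append u a) (Fin.append u' c)| ^ q ≤
          |Fn u u'| ^ q * (2 * bE) := by
    intro u u'
    by_cases he : edge F n u u'
    · have hpt : ∀ a : Word S m, ∑ c : Word S m,
          |crossF FB Fn (Fin.append u a) (Fin.append u' c)| ^ q ≤
            |Fn u u'| ^ q * |gfun FB (etyp F n u u') true a| ^ q := by
        intro a
        have e1 : ∀ c : Word S m,
            |crossF FB Fn (Fin.append u a) (Fin.append u' c)| ^ q =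
              (if (∀ i, F.glue (etyp F n u u') (a i) (c i)) then
                |Fn u u' * gfun FB (etyp F n u u') true a| ^ q else 0) := by
          intro c
          rw [crossF_app, if_congr (and_iff_right he) rfl rfl]
          split
          · rfl
          · rw [abs_zero, Real.zero_rpow (by linarith : q ≠ 0)]
        rw [Finset.sum_congr rfl (fun c _ => e1 c)]
        rw [sum_ite_glue_plus hGR hflip (etyp F n u u') a
          (fun _ => |Fn u u' * gfun FB (etyp F n u u') true a| ^ q)]
        split
        · rw [abs_mul, Real.mul_rpow (abs_nonneg _) (abs_nonneg _)]
        · positivity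
      calc ∑ a : Word S m, ∑ c : Word S m,
            |crossF FB Fn (Fin.append u a) (Fin.append u' c)| ^ q
          ≤ ∑ a : Word S m, |Fn u u'| ^ q * |gfun FB (etyp F n u u') true a| ^ q :=
            Finset.sum_le_sum fun a _ => hpt a
        _ = |Fn u u'| ^ q * ∑ a : Word S m, |gfun FB (etyp F n u u') true a| ^ q :=
            (Finset.mul_sum _ _ _).symm
        _ ≤ |Fn u u'| ^ q * (2 * bE) :=
            mul_le_mul_of_nonneg_left (gfun_pow_le hGR hm FB hq _ true) (by positivity)
    · have e0 : ∀ a c : Word S m,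
          |crossF FB Fn (Fin.append u a) (Fin.append u' c)| ^ q = 0 := by
        intro a c
        rw [crossF_app, if_neg (fun hc => he hc.1), abs_zero,
          Real.zero_rpow (by linarith : q ≠ 0)]
      calc ∑ a : Word S m, ∑ c : Word S m,
            |crossF FB Fn (Fin.append u a) (Fin.append u' c)| ^ q
          = ∑ a : Word S m, ∑ c : Word S m, (0:ℝ) :=
            Finset.sum_congr rfl fun a _ => Finset.sum_congr rfl fun c _ => e0 a c
        _ ≤ |Fn u u'| ^ q * (2 * bE) := by simp; positivity
  -- off-diagonal bound
  have hoff : ∀ u u' : Word S n, u ≠ u' →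
      ∑ a : Word S m, ∑ c : Word S m,
        |FnmF FB t₀ tA oA Fn (Fin.append u a) (Fin.append u' c)| ^ q ≤
        (|Fn u u'| ^ q + |Fn u' u| ^ q) * (2 * bE) := by
    intro u u' hneq
    have hpt : ∀ a c : Word S m,
        |FnmF FB t₀ tA oA Fn (Fin.append u a) (Fin.append u' c)| ^ q ≤
          |crossF FB Fn (Fin.append u a) (Fin.append u' c)| ^ q +
          |crossF FB Fn (Fin.append u' c) (Fin.append u a)| ^ q := by
      intro a c
      have hform : FnmF FB t₀ tA oA Fn (Fin.append u a) (Fin.append u' c) =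
          crossF FB Fn (Fin.append u a) (Fin.append u' c) -
            crossF FB Fn (Fin.append u' c) (Fin.append u a) := by
        simp only [FnmF, wLeft_append, wRight_append]
        rw [if_neg hneq]
      rw [hform]
      apply rpow_abs_sub_le_of_mul_eq_zero hq
      by_cases he : edge F n u u'
      · right
        rw [crossF_app]
        exact if_neg (fun hc => (edge_asymm F n u u' he) hc.1)
      · left
        rw [crossF_app]
        exact if_neg (fun hc => he hc.1)
    calc ∑ a : Word S m, ∑ c : Word S m,
          |FnmF FB t₀ tA oA Fn (Fin.append u a) (Fin.append u' c)| ^ q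
        ≤ ∑ a : Word S m, ∑ c : Word S m,
            (|crossF FB Fn (Fin.append u a) (Fin.append u' c)| ^ q +
             |crossF FB Fn (Fin.append u' c) (Fin.append u a)| ^ q) :=
          Finset.sum_le_sum fun a _ => Finset.sum_le_sum fun c _ => hpt a c
      _ = (∑ a : Word S m, ∑ c : Word S m,
            |crossF FB Fn (Fin.append u a) (Fin.append u' c)| ^ q) +
          ∑ a : Word S m, ∑ c : Word S m,
            |crossF FB Fn (Fin.append u' c) (Fin.append u a)| ^ q := by
          rw [← Finset.sum_add_distrib]
          exact Finset.sum_congr rfl fun a _ => Finset.sum_add_distrib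
      _ ≤ |Fn u u'| ^ q * (2 * bE) + |Fn u' u| ^ q * (2 * bE) := by
          apply add_le_add (hcross1 u u')
          rw [Finset.sum_comm]
          exact hcross1 u' u
      _ = (|Fn u u'| ^ q + |Fn u' u| ^ q) * (2 * bE) := by ring
  -- total double-sum identity
  have htot : 2 * energy q (FnmF FB t₀ tA oA Fn) =
      ∑ u : Word S n, ∑ u' : Word S n, ∑ a : Word S m, ∑ c : Word S m,
        |FnmF FB t₀ tA oA Fn (Fin.append u a) (Fin.append u' c)| ^ q := by
    rw [energy_eq_sum, mul_div_cancel₀ _ two_ne_zero]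
    have hin : ∀ x : Word S (n + m), ∑ y : Word S (n + m),
        |FnmF FB t₀ tA oA Fn x y| ^ q =
        ∑ u' : Word S n, ∑ c : Word S m,
          |FnmF FB t₀ tA oA Fn x (Fin.append u' c)| ^ q := by
      intro x
      rw [← Fintype.sum_bijective _ append_bijective
        (fun p : Word S n × Word S m => |FnmF FB t₀ tA oA Fn x (Fin.append p.1 p.2)| ^ q)
        (fun y => |FnmF FB t₀ tA oA Fn x y| ^ q) (fun p => rfl)]
      rw [Fintype.sum_prod_type]
    rw [← Fintype.sum_bijective _ append_bijective
      (fun p : Word S n × Word S m =>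
        ∑ y : Word S (n + m), |FnmF FB t₀ tA oA Fn (Fin.append p.1 p.2) y| ^ q)
      (fun x => ∑ y : Word S (n + m), |FnmF FB t₀ tA oA Fn x y| ^ q) (fun p => rfl)]
    rw [Fintype.sum_prod_type]
    rw [Finset.sum_congr rfl (fun u _ => Finset.sum_congr rfl
      (fun a _ => hin (Fin.append u a)))]
    exact Finset.sum_congr rfl fun u _ => Finset.sum_comm
  -- diagonal term of the split
  have hdiagterm : ∀ u : Word S n,
      ∑ a : Word S m, ∑ c : Word S m,
        |FnmF FB t₀ tA oA Fn (Fin.append u a) (Fin.append u c)| ^ q ≤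
        (2:ℝ) ^ q * (4 * bE) * ((Cdeg:ℝ) ^ q * ∑ y : Word S n, |Fn u y| ^ q) := by
    intro u
    have e1 : ∀ a c : Word S m, FnmF FB t₀ tA oA Fn (Fin.append u a) (Fin.append u c) =
        PhiIn FB t₀ tA oA Fn u a c := by
      intro a c
      simp only [FnmF, wLeft_append, wRight_append]
      simp
    rw [Finset.sum_congr rfl (fun a _ => Finset.sum_congr rfl (fun c _ => by rw [e1 a c]))]
    exact hdiag u
  -- per-row bound
  have hrow : ∀ u : Word S n,
      ∑ u' : Word S n, ∑ a : Word S m, ∑ c : Word S m,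
        |FnmF FB t₀ tA oA Fn (Fin.append u a) (Fin.append u' c)| ^ q ≤
      (2:ℝ) ^ q * (4 * bE) * ((Cdeg:ℝ) ^ q * ∑ y : Word S n, |Fn u y| ^ q) +
        ∑ u' : Word S n, (|Fn u u'| ^ q + |Fn u' u| ^ q) * (2 * bE) := by
    intro u
    rw [← Finset.add_sum_erase Finset.univ _ (Finset.mem_univ u)]
    apply add_le_add (hdiagterm u)
    refine le_trans (Finset.sum_le_sum (fun u' hu' =>
      hoff u u' (fun h => (Finset.ne_of_mem_erase hu') h.symm))) ?_
    apply Finset.sum_le_sum_of_subset_of_nonneg (Finset.erase_subset _ _)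
    intro u' _ _
    positivity
  -- the ℓ^q mass of Fn
  have hFnmass : ∑ u : Word S n, ∑ y : Word S n, |Fn u y| ^ q = 2 * eF := by
    have := energy_eq_sum q Fn
    rw [heFdef, this]
    ring
  have hFnmass' : ∑ u : Word S n, ∑ y : Word S n, |Fn y u| ^ q = 2 * eF := by
    rw [Finset.sum_comm]
    exact hFnmass
  -- assemble
  have hfinal : 2 * energy q (FnmF FB t₀ tA oA Fn) ≤
      (2:ℝ) ^ q * (4 * bE) * ((Cdeg:ℝ) ^ q * (2 * eF)) + (2 * eF + 2 * eF) * (2 * bE) := by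
    rw [htot]
    refine le_trans (Finset.sum_le_sum fun u _ => hrow u) ?_
    rw [Finset.sum_add_distrib]
    apply add_le_add
    · apply le_of_eq
      calc ∑ u : Word S n, (2:ℝ) ^ q * (4 * bE) *
            ((Cdeg:ℝ) ^ q * ∑ y : Word S n, |Fn u y| ^ q)
          = ∑ u : Word S n, ((2:ℝ) ^ q * (4 * bE) * (Cdeg:ℝ) ^ q) *
              ∑ y : Word S n, |Fn u y| ^ q :=
            Finset.sum_congr rfl fun u _ => by ring
        _ = ((2:ℝ) ^ q * (4 * bE) * (Cdeg:ℝ) ^ q) *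
              ∑ u : Word S n, ∑ y : Word S n, |Fn u y| ^ q :=
            (Finset.mul_sum _ _ _).symm
        _ = (2:ℝ) ^ q * (4 * bE) * ((Cdeg:ℝ) ^ q * (2 * eF)) := by
            rw [hFnmass]; ring
    · apply le_of_eq
      calc ∑ u : Word S n, ∑ u' : Word S n, (|Fn u u'| ^ q + |Fn u' u| ^ q) * (2 * bE)
          = ∑ u : Word S n, ((∑ u' : Word S n, |Fn u u'| ^ q * (2 * bE)) +
              ∑ u' : Word S n, |Fn u' u| ^ q * (2 * bE)) := by
            apply Finset.sum_congr rfl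
            intro u _
            rw [← Finset.sum_add_distrib]
            exact Finset.sum_congr rfl fun u' _ => by ring
        _ = (∑ u : Word S n, ∑ u' : Word S n, |Fn u u'| ^ q * (2 * bE)) +
              ∑ u : Word S n, ∑ u' : Word S n, |Fn u' u| ^ q * (2 * bE) :=
            Finset.sum_add_distrib
        _ = (∑ u : Word S n, (∑ u' : Word S n, |Fn u u'| ^ q) * (2 * bE)) +
              ∑ u : Word S n, (∑ u' : Word S n, |Fn u' u| ^ q) * (2 * bE) := by
            congr 1 <;> exact Finset.sum_congr rfl fun u _ => (Finset.sum_mul _ _ _).symm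
        _ = (∑ u : Word S n, ∑ u' : Word S n, |Fn u u'| ^ q) * (2 * bE) +
              (∑ u : Word S n, ∑ u' : Word S n, |Fn u' u| ^ q) * (2 * bE) := by
            congr 1 <;> exact (Finset.sum_mul _ _ _).symm
        _ = (2 * eF + 2 * eF) * (2 * bE) := by
            rw [hFnmass, hFnmass']; ring
  -- conclude
  have hCpow : (2:ℝ) ^ (q + 3) = (2:ℝ) ^ q * 8 := by
    rw [Real.rpow_add (by norm_num : (0:ℝ) < 2) q 3]
    congr 1
    rw [show (3:ℝ) = ((3:ℕ):ℝ) from by norm_num, Real.rpow_natCast]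
    norm_num
  have hCd : ((Cdeg:ℝ)) ^ q ≤ ((Cdeg:ℝ) + 1) ^ q :=
    Real.rpow_le_rpow (by positivity) (by linarith) hq0
  have h2q : (0:ℝ) ≤ (2:ℝ) ^ q := by positivity
  have hP : (0:ℝ) ≤ (2:ℝ) ^ q * ((Cdeg:ℝ) + 1) ^ q * bE * eF := by
    apply mul_nonneg (mul_nonneg (mul_nonneg h2q (by positivity)) hbe) hef
  have hQ : (0:ℝ) ≤ bE * eF := mul_nonneg hbe hef
  have hkey : (2:ℝ) ^ q * (4 * bE) * ((Cdeg:ℝ) ^ q * (2 * eF)) ≤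
      8 * ((2:ℝ) ^ q * ((Cdeg:ℝ) + 1) ^ q * bE * eF) := by
    have e1 : (2:ℝ) ^ q * (4 * bE) * ((Cdeg:ℝ) ^ q * (2 * eF)) =
        ((Cdeg:ℝ) ^ q) * ((2:ℝ) ^ q * (8 * (bE * eF))) := by ring
    have e2 : (8:ℝ) * ((2:ℝ) ^ q * ((Cdeg:ℝ) + 1) ^ q * bE * eF) =
        (((Cdeg:ℝ) + 1) ^ q) * ((2:ℝ) ^ q * (8 * (bE * eF))) := by ring
    rw [e1, e2]
    apply mul_le_mul_of_nonneg_right hCd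
    apply mul_nonneg h2q
    linarith
  have hbound2 : 2 * energy q (FnmF FB t₀ tA oA Fn) ≤
      2 * (((2:ℝ) ^ (q + 3) * ((Cdeg:ℝ) + 1) ^ q + 8) * bE * eF) := by
    have etarget : 2 * (((2:ℝ) ^ (q + 3) * ((Cdeg:ℝ) + 1) ^ q + 8) * bE * eF) =
        16 * ((2:ℝ) ^ q * ((Cdeg:ℝ) + 1) ^ q * bE * eF) + 16 * (bE * eF) := by
      rw [hCpow]; ring
    have eoff : (2 * eF + 2 * eF) * (2 * bE) = 8 * (bE * eF) := by ring
    rw [etarget]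
    rw [eoff] at hfinal
    linarith
  linarith

end Statement17Aux6
theorem totalFlow_eq_sum {V : Type} [Fintype V] (A : Set V) (Φ : V → V → ℝ) :
    totalFlow A Φ = ∑ x : V, A.indicator (fdiv Φ) x := by
  rw [totalFlow, finsum_mem_def, finsum_eq_sum_of_fintype]

open Classical in
theorem sum_append_reindex {S : Type} [Fintype S] {n m : ℕ} (f : Word S (n + m) → ℝ) :
    ∑ x : Word S (n + m), f x = ∑ u : Word S n, ∑ c : Word S m, f (Fin.append u c) := by
  rw [← Fintype.sum_bijective _ append_bijective
    (fun p : Word S n × Word S m => f (Fin.append p.1 p.2)) f (fun p => rfl),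
    Fintype.sum_prod_type]
set_option maxHeartbeats 2000000 in
/-- The replacement flow theorem: given a flow basis `𝓕^{(m)}` on
`G̃_m` and a unit flow `F_n` from `A_n` to `B_n` in `G_n` (with assigned types and
orientations on `A_n ∪ B_n`), there are a constant `C ≥ 1` depending only on the degree
bound and on `p`, and a unit flow `F_{n+m}` from `A_{n+m}` to `B_{n+m}` in `G_{n+m}` with
`E_q(F_{n+m}) ≤ C · E_q(𝓕^{(m)}) · E_q(F_n)` and with prescribed divergence on the
boundary words. -/
theorem statement17 (Cdeg : ℕ) (p : ℝ) (hp : 1 < p) (q : ℝ) (hq : q = p / (p - 1)) :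
    ∃ C : ℝ, 1 ≤ C ∧
      ∀ (S T : Type) [Fintype S] [Nonempty T] (F : System S T), GR F →
        (∀ (l : ℕ) (w : Word S l), degGm F l w ≤ Cdeg) →
        ∀ ηfam : T → Iso F F, (∀ t, IsFlip F t (ηfam t)) →
        ∀ n m : ℕ, 1 ≤ n → 1 ≤ m →
        ∀ A B : Set (Word S n), A.Nonempty → B.Nonempty → (∀ x, ¬ (x ∈ A ∧ x ∈ B)) →
        ∀ tA : Word S n → T, ∀ oA : Word S n → Bool,
        ∀ FB : FlowBasis F ηfam m,
        ∀ Fn : Word S n → Word S n → ℝ,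
          IsFlow (replGraph F n) A B Fn → totalFlow A Fn = 1 →
          ∃ Fnm : Word S (n + m) → Word S (n + m) → ℝ,
            IsFlow (replGraph F (n + m))
              {x : Word S (n + m) | ∃ u ∈ A, ∃ v : Word S m,
                (∀ i, v i ∈ Iset F (tA u) (oA u)) ∧ x = Fin.append u v}
              {x : Word S (n + m) | ∃ u ∈ B, ∃ v : Word S m,
                (∀ i, v i ∈ Iset F (tA u) (oA u)) ∧ x = Fin.append u v}
              Fnm ∧
            totalFlow
              {x : Word S (n + m) | ∃ u ∈ A, ∃ v : Word S m,
                (∀ i, v i ∈ Iset F (tA u) (oA u)) ∧ x = Fin.append u v} Fnm = 1 ∧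
            energy q Fnm ≤ C * basisEnergy q FB * energy q Fn ∧
            (∀ u : Word S n, u ∈ A ∪ B →
              ∀ pr : AddedV F m, pr.1.1 = IsetW F (tA u) (oA u) m →
              ∀ hne : pr.1.1 ≠ IsetW F (tA u) (!(oA u)) m,
                fdiv Fnm (Fin.append u pr.1.2) =
                  fdiv Fn u *
                    FB.flow pr.1.1 (IsetW F (tA u) (!(oA u)) m) pr.2.1
                      (by exact ⟨tA u, !(oA u), rfl⟩) hne
                      (Sum.inr pr) (Sum.inl pr.1.2)) := by
  classical
  have hp0 : 0 < p - 1 := by linarith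
  have hq1 : 1 < q := by
    rw [hq, one_lt_div hp0]
    linarith
  have hq1' : 1 ≤ q := le_of_lt hq1
  refine ⟨(2:ℝ) ^ (q + 3) * ((Cdeg:ℝ) + 1) ^ q + 8, ?_, ?_⟩
  · have h0 : (0:ℝ) ≤ (2:ℝ) ^ (q + 3) * ((Cdeg:ℝ) + 1) ^ q := by positivity
    linarith
  · intro S T _ _ F hGR hdeg ηfam hflip n m hn hm A B hA hB hAB tA oA FB Fn hFn hUnit
    set t₀ : T := Classical.arbitrary T with ht₀
    set A' : Set (Word S (n + m)) := {x : Word S (n + m) | ∃ u ∈ A, ∃ v : Word S m,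
      (∀ i, v i ∈ Iset F (tA u) (oA u)) ∧ x = Fin.append u v} with hA'def
    set B' : Set (Word S (n + m)) := {x : Word S (n + m) | ∃ u ∈ B, ∃ v : Word S m,
      (∀ i, v i ∈ Iset F (tA u) (oA u)) ∧ x = Fin.append u v} with hB'def
    have hdivkey : ∀ (u : Word S n) (v : Word S m),
        fdiv (FnmF FB t₀ tA oA Fn) (Fin.append u v) =
          fdiv Fn u * gfun FB (tA u) (oA u) v :=
      fun u v => fdiv_FnmF hGR hn hm hflip FB t₀ tA oA Fn hFn.1 u v
    refine ⟨FnmF FB t₀ tA oA Fn, ⟨⟨?_, ?_⟩, ?_⟩, ?_, ?_, ?_⟩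
    · exact fun x y => FnmF_antisym FB t₀ tA oA Fn x y
    · exact fun x y h => FnmF_support hGR hn hm FB t₀ tA oA Fn x y h
    · -- divergence zero off A' ∪ B'
      intro x hx
      have hkey := hdivkey (wLeft x) (wRight x)
      rw [append_wLR x] at hkey
      rw [hkey]
      by_cases hu : wLeft x ∈ A ∪ B
      · have hg : gfun FB (tA (wLeft x)) (oA (wLeft x)) (wRight x) = 0 := by
          apply gfun_zero
          intro hv
          apply hx
          rcases hu with hu | hu
          · exact Or.inl ⟨wLeft x, hu, wRight x, hv, (append_wLR x).symm⟩
          · exact Or.inr ⟨wLeft x, hu, wRight x, hv, (append_wLR x).symm⟩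
        rw [hg, mul_zero]
      · rw [hFn.2 _ hu, zero_mul]
    · -- total flow
      have hchar : ∀ (u : Word S n) (c : Word S m), Fin.append u c ∈ A' ↔
          (u ∈ A ∧ ∀ i, c i ∈ Iset F (tA u) (oA u)) := by
        intro u c
        constructor
        · rintro ⟨u', hu', v', hv', heq⟩
          obtain rfl := append_inj_left heq
          obtain rfl := append_inj_right heq
          exact ⟨hu', hv'⟩
        · rintro ⟨hu, hc⟩
          exact ⟨u, hu, c, hc, rfl⟩
      have step1 : totalFlow A' (FnmF FB t₀ tA oA Fn) =
          ∑ u : Word S n, ∑ c : Word S m,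
            A'.indicator (fdiv (FnmF FB t₀ tA oA Fn)) (Fin.append u c) :=
        (totalFlow_eq_sum A' (FnmF FB t₀ tA oA Fn)).trans
          (sum_append_reindex (A'.indicator (fdiv (FnmF FB t₀ tA oA Fn))))
      rw [step1]
      have hinner : ∀ u : Word S n,
          (∑ c : Word S m, A'.indicator (fdiv (FnmF FB t₀ tA oA Fn)) (Fin.append u c)) =
          A.indicator (fdiv Fn) u := by
        intro u
        have e1 : ∀ c : Word S m,
            A'.indicator (fdiv (FnmF FB t₀ tA oA Fn)) (Fin.append u c) =
            (if u ∈ A then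
              (if (∀ i, c i ∈ Iset F (tA u) (oA u)) then
                fdiv Fn u * gfun FB (tA u) (oA u) c else 0) else 0) := by
          intro c
          rw [Set.indicator_apply, hdivkey u c, if_congr (hchar u c) rfl rfl, ite_and]
        rw [Finset.sum_congr rfl fun c _ => e1 c]
        by_cases hu : u ∈ A
        · rw [Set.indicator_of_mem hu]
          rw [Finset.sum_congr rfl (fun c _ => if_pos hu :
            ∀ c ∈ Finset.univ, (if u ∈ A then
              (if (∀ i, c i ∈ Iset F (tA u) (oA u)) then
                fdiv Fn u * gfun FB (tA u) (oA u) c else 0) else 0) =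
              (if (∀ i, c i ∈ Iset F (tA u) (oA u)) then
                fdiv Fn u * gfun FB (tA u) (oA u) c else 0))]
          have e2 : ∀ c : Word S m,
              (if (∀ i, c i ∈ Iset F (tA u) (oA u)) then
                fdiv Fn u * gfun FB (tA u) (oA u) c else 0) =
                fdiv Fn u * gfun FB (tA u) (oA u) c := by
            intro c
            by_cases hc : ∀ i, c i ∈ Iset F (tA u) (oA u)
            · rw [if_pos hc]
            · rw [if_neg hc, gfun_zero FB hc, mul_zero]
          rw [Finset.sum_congr rfl fun c _ => e2 c, ← Finset.mul_sum,
            gfun_mass hGR hm FB (tA u) (oA u), mul_one]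
        · rw [Set.indicator_of_notMem hu]
          exact Finset.sum_eq_zero fun c _ => if_neg hu
      rw [Finset.sum_congr rfl fun u _ => hinner u]
      rw [totalFlow_eq_sum] at hUnit
      exact hUnit
    · -- energy
      exact energy_FnmF_le hGR hn hm hflip FB t₀ tA oA Fn hFn.1 hq1' Cdeg hdeg
    · -- prescribed divergence
      intro u hu pr hpr hne
      obtain ⟨⟨L', w⟩, hL', hw⟩ := pr
      simp only at hpr
      subst hpr
      rw [hdivkey u w]
      congr 1
      exact (gout_eq hGR hm FB hL' ⟨tA u, !(oA u), rfl⟩ hne w hw).symm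

end IGSP
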